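/- arXiv:2510.03096 — 6 statements merged into one kernel-verified Lean document; each statement's English description precedes it below -/
import Mathlib

section
/- Let Z := f(X; A, Θ) and Z* := f(X*; A*, Θ) be the outputs of the two-layer GCN applied to the original data (X, A) and to the idealized data (X*, A*). Then ‖Z* − Z‖_F ≤ τ²ω² · ( ‖Ã*_rw − Ã_rw‖_F · ‖X‖_F + ‖X* − Ã_rw X‖_F ). -/
open Matrix BigOperators Finset

noncomputable def frobNorm {m n : Type*} [Fintype m] [Fintype n] (M : Matrix m n ℝ) : ℝ :=
  Real.sqrt (∑ i, ∑ j, (M i j) ^ 2)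

noncomputable def rowNorm {n : Type*} [Fintype n] (v : n → ℝ) : ℝ :=
  Real.sqrt (∑ j, (v j) ^ 2)

noncomputable def specNorm {m n : Type*} [Fintype m] [Fintype n] [DecidableEq n]
    (M : Matrix m n ℝ) : ℝ :=
  ‖LinearMap.toContinuousLinearMap (Matrix.toEuclideanLin M)‖

noncomputable def arw {N : ℕ} (A : Matrix (Fin N) (Fin N) ℝ) : Matrix (Fin N) (Fin N) ℝ :=
  Matrix.of fun i j => (A + 1) i j / ((∑ k, A i k) + 1)

def astar {N C : ℕ} (A : Matrix (Fin N) (Fin N) ℝ) (y : Fin N → Fin C) :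
    Matrix (Fin N) (Fin N) ℝ :=
  Matrix.of fun i j => if y i = y j then A i j else 0

noncomputable def gcn {N M₀ H₁ H : ℕ} (σ1 σ2 : ℝ → ℝ)
    (S : Matrix (Fin N) (Fin N) ℝ) (X : Matrix (Fin N) (Fin M₀) ℝ)
    (Θ1 : Matrix (Fin M₀) (Fin H₁) ℝ) (Θ2 : Matrix (Fin H₁) (Fin H) ℝ) :
    Matrix (Fin N) (Fin H) ℝ :=
  (S * ((S * X * Θ1).map σ1) * Θ2).map σ2

def oneHot {N C : ℕ} (y : Fin N → Fin C) : Matrix (Fin N) (Fin C) ℝ :=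
  Matrix.of fun i c => if y i = c then 1 else 0

/-! ### Auxiliary lemmas -/

lemma frobNorm_nonneg {m n : Type*} [Fintype m] [Fintype n] (M : Matrix m n ℝ) :
    0 ≤ frobNorm M := Real.sqrt_nonneg _

lemma frobNorm_sq {m n : Type*} [Fintype m] [Fintype n] (M : Matrix m n ℝ) :
    frobNorm M ^ 2 = ∑ i, ∑ j, (M i j) ^ 2 :=
  Real.sq_sqrt (Finset.sum_nonneg fun _ _ => Finset.sum_nonneg fun _ _ => sq_nonneg _)

lemma frobNorm_eq_euclidean {m n : Type*} [Fintype m] [Fintype n] (M : Matrix m n ℝ) :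
    frobNorm M = ‖(WithLp.equiv 2 ((m × n) → ℝ)).symm (fun p => M p.1 p.2)‖ := by
  rw [EuclideanSpace.norm_eq]
  simp [frobNorm, Fintype.sum_prod_type, Real.norm_eq_abs, sq_abs]

lemma frobNorm_add_le {m n : Type*} [Fintype m] [Fintype n] (M N : Matrix m n ℝ) :
    frobNorm (M + N) ≤ frobNorm M + frobNorm N := by
  rw [frobNorm_eq_euclidean, frobNorm_eq_euclidean, frobNorm_eq_euclidean]
  exact norm_add_le ((WithLp.equiv 2 ((m × n) → ℝ)).symm (fun p => M p.1 p.2))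
    ((WithLp.equiv 2 ((m × n) → ℝ)).symm (fun p => N p.1 p.2))

lemma frobNorm_transpose {m n : Type*} [Fintype m] [Fintype n] (M : Matrix m n ℝ) :
    frobNorm Mᵀ = frobNorm M := by
  unfold frobNorm
  rw [Finset.sum_comm]
  rfl

lemma rowNorm_eq_norm {n : Type*} [Fintype n] (v : n → ℝ) :
    rowNorm v = ‖(WithLp.equiv 2 (n → ℝ)).symm v‖ := by
  rw [EuclideanSpace.norm_eq]
  simp [rowNorm, Real.norm_eq_abs, sq_abs]

lemma rowNorm_nonneg {n : Type*} [Fintype n] (v : n → ℝ) : 0 ≤ rowNorm v :=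
  Real.sqrt_nonneg _

lemma rowNorm_sq {n : Type*} [Fintype n] (v : n → ℝ) :
    rowNorm v ^ 2 = ∑ j, (v j) ^ 2 :=
  Real.sq_sqrt (Finset.sum_nonneg fun _ _ => sq_nonneg _)

lemma specNorm_nonneg {m n : Type*} [Fintype m] [Fintype n] [DecidableEq n]
    (M : Matrix m n ℝ) : 0 ≤ specNorm M := norm_nonneg _

section Spec
open scoped Matrix.Norms.L2Operator

lemma specNorm_eq_l2 {m n : Type*} [Fintype m] [Fintype n] [DecidableEq n] (M : Matrix m n ℝ) :
    specNorm M = ‖M‖ := by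
  rw [Matrix.l2_opNorm_def, LinearEquiv.trans_apply]
  rfl

lemma specNorm_transpose {m n : Type*} [Fintype m] [Fintype n] [DecidableEq m] [DecidableEq n]
    (M : Matrix m n ℝ) : specNorm Mᵀ = specNorm M := by
  rw [specNorm_eq_l2, specNorm_eq_l2, ← Matrix.l2_opNorm_conjTranspose M,
    Matrix.conjTranspose_eq_transpose_of_trivial]

end Spec

lemma rowNorm_mulVec_le {m n : Type*} [Fintype m] [Fintype n] [DecidableEq n]
    (M : Matrix m n ℝ) (v : n → ℝ) :
    rowNorm (M.mulVec v) ≤ specNorm M * rowNorm v := by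
  have h := (LinearMap.toContinuousLinearMap (Matrix.toEuclideanLin M)).le_opNorm
    ((WithLp.equiv 2 (n → ℝ)).symm v)
  rw [rowNorm_eq_norm, rowNorm_eq_norm]
  simpa [Matrix.toEuclideanLin_apply_piLp_toLp, specNorm] using h

lemma frobNorm_mul_le_spec_left {m n k : Type*} [Fintype m] [Fintype n] [Fintype k]
    [DecidableEq n] (S : Matrix m n ℝ) (M : Matrix n k ℝ) :
    frobNorm (S * M) ≤ specNorm S * frobNorm M := by
  have hs := specNorm_nonneg S
  have key : ∑ i, ∑ j, ((S * M) i j) ^ 2 ≤ (specNorm S) ^ 2 * ∑ i, ∑ j, (M i j) ^ 2 := by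
    rw [Finset.sum_comm, Finset.sum_comm (γ := n)]
    rw [Finset.mul_sum]
    refine Finset.sum_le_sum fun j _ => ?_
    have h := rowNorm_mulVec_le S (fun i => M i j)
    have h2 : rowNorm (S.mulVec fun i => M i j) ^ 2
        ≤ (specNorm S * rowNorm fun i => M i j) ^ 2 :=
      pow_le_pow_left₀ (rowNorm_nonneg _) h 2
    rw [rowNorm_sq, mul_pow, rowNorm_sq] at h2
    calc ∑ i, ((S * M) i j) ^ 2 = ∑ i, (S.mulVec (fun i => M i j) i) ^ 2 := by
          refine Finset.sum_congr rfl fun i _ => ?_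
          simp [Matrix.mul_apply, Matrix.mulVec, dotProduct]
      _ ≤ specNorm S ^ 2 * ∑ i, (M i j) ^ 2 := h2
  calc frobNorm (S * M) = Real.sqrt (∑ i, ∑ j, ((S * M) i j) ^ 2) := rfl
    _ ≤ Real.sqrt ((specNorm S) ^ 2 * ∑ i, ∑ j, (M i j) ^ 2) := Real.sqrt_le_sqrt key
    _ = specNorm S * frobNorm M := by
        rw [Real.sqrt_mul (sq_nonneg _), Real.sqrt_sq hs]
        rfl

lemma frobNorm_mul_le_spec_right {m n k : Type*} [Fintype m] [Fintype n] [Fintype k]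
    [DecidableEq n] [DecidableEq k] (M : Matrix m n ℝ) (P : Matrix n k ℝ) :
    frobNorm (M * P) ≤ frobNorm M * specNorm P := by
  have h := frobNorm_mul_le_spec_left Pᵀ Mᵀ
  rw [← Matrix.transpose_mul, frobNorm_transpose, frobNorm_transpose, specNorm_transpose] at h
  linarith

lemma frobNorm_mul_le {m n k : Type*} [Fintype m] [Fintype n] [Fintype k]
    (M : Matrix m n ℝ) (P : Matrix n k ℝ) :
    frobNorm (M * P) ≤ frobNorm M * frobNorm P := by
  have key : ∑ i, ∑ j, ((M * P) i j) ^ 2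
      ≤ (∑ i, ∑ l, (M i l) ^ 2) * (∑ j : k, ∑ l, (P l j) ^ 2) := by
    rw [Finset.sum_mul_sum Finset.univ Finset.univ (fun i => ∑ l, (M i l) ^ 2)
      (fun j : k => ∑ l, (P l j) ^ 2)]
    refine Finset.sum_le_sum fun i _ => ?_
    refine Finset.sum_le_sum fun j _ => ?_
    rw [Matrix.mul_apply]
    exact Finset.sum_mul_sq_le_sq_mul_sq _ _ _
  calc frobNorm (M * P) = Real.sqrt (∑ i, ∑ j, ((M * P) i j) ^ 2) := rfl
    _ ≤ Real.sqrt ((∑ i, ∑ l, (M i l) ^ 2) * (∑ j : k, ∑ l, (P l j) ^ 2)) :=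
        Real.sqrt_le_sqrt key
    _ = frobNorm M * frobNorm P := by
        rw [Real.sqrt_mul (x := ∑ i, ∑ l, (M i l) ^ 2) (Finset.sum_nonneg fun _ _ => Finset.sum_nonneg fun _ _ => sq_nonneg _)]
        unfold frobNorm
        rw [Finset.sum_comm (γ := k)]

lemma frobNorm_le_of_entry_le {m n : Type*} [Fintype m] [Fintype n] {τ : ℝ} (hτ : 0 ≤ τ)
    {M N : Matrix m n ℝ} (h : ∀ i j, (M i j) ^ 2 ≤ τ ^ 2 * (N i j) ^ 2) :
    frobNorm M ≤ τ * frobNorm N := by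
  have key : ∑ i, ∑ j, (M i j) ^ 2 ≤ τ ^ 2 * ∑ i, ∑ j, (N i j) ^ 2 := by
    rw [Finset.mul_sum]
    refine Finset.sum_le_sum fun i _ => ?_
    rw [Finset.mul_sum]
    exact Finset.sum_le_sum fun j _ => h i j
  calc frobNorm M ≤ Real.sqrt (τ ^ 2 * ∑ i, ∑ j, (N i j) ^ 2) := Real.sqrt_le_sqrt key
    _ = τ * frobNorm N := by rw [Real.sqrt_mul (sq_nonneg _), Real.sqrt_sq hτ]; rfl

lemma frobNorm_map_sub_le {m n : Type*} [Fintype m] [Fintype n] {σ : ℝ → ℝ} {τ : ℝ}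
    (hσ : ∀ a b, |σ a - σ b| ≤ τ * |a - b|) (M N : Matrix m n ℝ) :
    frobNorm (M.map σ - N.map σ) ≤ τ * frobNorm (M - N) := by
  have hτ : 0 ≤ τ := le_trans (abs_nonneg _) (by simpa using hσ 1 0)
  refine frobNorm_le_of_entry_le hτ fun i j => ?_
  have h := hσ (M i j) (N i j)
  have : ((M.map σ - N.map σ) i j) ^ 2 = (σ (M i j) - σ (N i j)) ^ 2 := by
    simp [Matrix.sub_apply, Matrix.map_apply]
  rw [this]
  calc (σ (M i j) - σ (N i j)) ^ 2 = |σ (M i j) - σ (N i j)| ^ 2 := (sq_abs _).symm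
    _ ≤ (τ * |M i j - N i j|) ^ 2 := pow_le_pow_left₀ (abs_nonneg _) h 2
    _ = τ ^ 2 * ((M - N) i j) ^ 2 := by rw [mul_pow, sq_abs]; simp [Matrix.sub_apply]

lemma frobNorm_map_le {m n : Type*} [Fintype m] [Fintype n] {σ : ℝ → ℝ} {τ : ℝ}
    (hσ : ∀ a b, |σ a - σ b| ≤ τ * |a - b|) (hσ0 : σ 0 = 0) (M : Matrix m n ℝ) :
    frobNorm (M.map σ) ≤ τ * frobNorm M := by
  have h := frobNorm_map_sub_le hσ M 0
  rwa [Matrix.map_zero _ hσ0, sub_zero, sub_zero] at h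

/-- Intermediate bound: the GCN output discrepancy is controlled by the discrepancy of the
normalized adjacency matrices and the feature misalignment. -/
theorem gcn_error_intermediate
    {N M₀ H₁ H C : ℕ}
    (A : Matrix (Fin N) (Fin N) ℝ) (X : Matrix (Fin N) (Fin M₀) ℝ)
    (y : Fin N → Fin C)
    (σ1 σ2 : ℝ → ℝ) (τ ω : ℝ)
    (Θ1 : Matrix (Fin M₀) (Fin H₁) ℝ) (Θ2 : Matrix (Fin H₁) (Fin H) ℝ)
    (hA : ∀ i j, 0 ≤ A i j)
    (hclass : ∀ c : Fin C, ∃ i, y i = c)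
    (hσ1 : ∀ a b, |σ1 a - σ1 b| ≤ τ * |a - b|) (hσ10 : σ1 0 = 0)
    (hσ2 : ∀ a b, |σ2 a - σ2 b| ≤ τ * |a - b|) (hσ20 : σ2 0 = 0)
    (hΘ1 : specNorm Θ1 ≤ ω) (hΘ2 : specNorm Θ2 ≤ ω)
    (hArw : specNorm (arw A) ≤ 1)
    (hAstarRw : specNorm (arw (astar A y)) ≤ 1) :
    let Y : Matrix (Fin N) (Fin C) ℝ := oneHot y
    let p : Fin C → ℝ := fun c => ∑ i, Y i c
    let B : Matrix (Fin N) (Fin N) ℝ := Y * Matrix.diagonal (fun c => (p c)⁻¹) * Yᵀ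
    let Xstar : Matrix (Fin N) (Fin M₀) ℝ := B * X
    let Z := gcn σ1 σ2 (arw A) X Θ1 Θ2
    let Zstar := gcn σ1 σ2 (arw (astar A y)) Xstar Θ1 Θ2
    frobNorm (Zstar - Z) ≤ τ ^ 2 * ω ^ 2 *
      (frobNorm (arw (astar A y) - arw A) * frobNorm X +
        frobNorm (Xstar - arw A * X)) := by
  intro Y p B Xstar Z Zstar
  have hτ : 0 ≤ τ := le_trans (abs_nonneg _) (by simpa using hσ1 1 0)
  have hω : 0 ≤ ω := le_trans (specNorm_nonneg Θ1) hΘ1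
  set S : Matrix (Fin N) (Fin N) ℝ := arw A with hS
  set S' : Matrix (Fin N) (Fin N) ℝ := arw (astar A y) with hS'
  set Hm : Matrix (Fin N) (Fin H₁) ℝ := (S * X * Θ1).map σ1 with hHm
  set Hm' : Matrix (Fin N) (Fin H₁) ℝ := (S' * Xstar * Θ1).map σ1 with hHm'
  -- B entries
  have hBapply : ∀ i l, B i l = if y i = y l then (p (y i))⁻¹ else 0 := by
    intro i l
    have : B i l = ∑ c, Y i c * (p c)⁻¹ * Y l c := by
      simp [B, Matrix.mul_apply, Matrix.transpose_apply, Matrix.diagonal_apply, mul_ite,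
        mul_zero, Finset.sum_ite_eq']
    rw [this, Finset.sum_eq_single (y i)]
    · have h1 : Y i (y i) = 1 := if_pos rfl
      by_cases h : y i = y l
      · have h2 : Y l (y i) = 1 := if_pos h.symm
        rw [h1, h2, if_pos h]; ring
      · have h2 : Y l (y i) = 0 := if_neg (fun hh => h hh.symm)
        rw [h1, h2, if_neg h]; ring
    · intro c _ hc
      have h1 : Y i c = 0 := if_neg (fun hh => hc hh.symm)
      rw [h1]; ring
    · intro h
      exact absurd (Finset.mem_univ _) h
  -- rows of S' sum to one
  have hrow : ∀ i, ∑ j, S' i j = 1 := by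
    intro i
    have hd : (0:ℝ) ≤ ∑ k, astar A y i k :=
      Finset.sum_nonneg fun k _ => by
        simp only [astar, Matrix.of_apply]
        split_ifs
        · exact hA i k
        · exact le_refl 0
    have hden : (∑ k, astar A y i k) + 1 ≠ 0 := by positivity
    simp only [hS', arw, Matrix.of_apply]
    rw [← Finset.sum_div, div_eq_one_iff_eq hden]
    simp [Matrix.add_apply, Matrix.one_apply, Finset.sum_add_distrib]
  -- S' * B = B
  have hSB : S' * B = B := by
    ext i l
    rw [Matrix.mul_apply]
    have hterm : ∀ j, S' i j * B j l = S' i j * B i l := by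
      intro j
      by_cases hy : y j = y i
      · rw [hBapply, hBapply, hy]
      · have hz : S' i j = 0 := by
          have hij : i ≠ j := fun h => hy (by rw [h])
          simp only [hS', arw, Matrix.of_apply, Matrix.add_apply, astar, Matrix.one_apply,
            if_neg (fun h : y i = y j => hy h.symm), if_neg hij, add_zero, zero_div]
        rw [hz, zero_mul, zero_mul]
    rw [Finset.sum_congr rfl fun j _ => hterm j, ← Finset.sum_mul, hrow i, one_mul]
  have hkey : S' * Xstar = Xstar := by
    show S' * (B * X) = B * X
    rw [← Matrix.mul_assoc, hSB]
  -- bound on Hm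
  have hHmbound : frobNorm Hm ≤ τ * (frobNorm X * ω) := by
    have h1 : frobNorm Hm ≤ τ * frobNorm (S * X * Θ1) := frobNorm_map_le hσ1 hσ10 _
    have h2 : frobNorm (S * X * Θ1) ≤ frobNorm (S * X) * specNorm Θ1 :=
      frobNorm_mul_le_spec_right _ _
    have h3 : frobNorm (S * X) ≤ specNorm S * frobNorm X := frobNorm_mul_le_spec_left _ _
    have h4 : frobNorm (S * X) ≤ frobNorm X := by
      calc frobNorm (S * X) ≤ specNorm S * frobNorm X := h3
        _ ≤ 1 * frobNorm X := mul_le_mul_of_nonneg_right hArw (frobNorm_nonneg _)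
        _ = frobNorm X := one_mul _
    have h5 : frobNorm (S * X * Θ1) ≤ frobNorm X * ω :=
      le_trans h2 (mul_le_mul h4 hΘ1 (specNorm_nonneg _) (frobNorm_nonneg _))
    exact le_trans h1 (mul_le_mul_of_nonneg_left h5 hτ)
  -- bound on Hm' - Hm
  have hHdiff : frobNorm (Hm' - Hm) ≤ τ * (frobNorm (Xstar - S * X) * ω) := by
    have h1 : frobNorm (Hm' - Hm) ≤ τ * frobNorm (S' * Xstar * Θ1 - S * X * Θ1) :=
      frobNorm_map_sub_le hσ1 _ _
    have heq : S' * Xstar * Θ1 - S * X * Θ1 = (Xstar - S * X) * Θ1 := by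
      rw [← Matrix.sub_mul, hkey]
    rw [heq] at h1
    have h2 : frobNorm ((Xstar - S * X) * Θ1) ≤ frobNorm (Xstar - S * X) * specNorm Θ1 :=
      frobNorm_mul_le_spec_right _ _
    have h3 : frobNorm ((Xstar - S * X) * Θ1) ≤ frobNorm (Xstar - S * X) * ω :=
      le_trans h2 (mul_le_mul_of_nonneg_left hΘ1 (frobNorm_nonneg _))
    exact le_trans h1 (mul_le_mul_of_nonneg_left h3 hτ)
  -- main chain
  have hZ : Zstar - Z = (S' * Hm' * Θ2).map σ2 - (S * Hm * Θ2).map σ2 := rfl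
  have e1 : frobNorm (Zstar - Z) ≤ τ * frobNorm (S' * Hm' * Θ2 - S * Hm * Θ2) := by
    rw [hZ]; exact frobNorm_map_sub_le hσ2 _ _
  have e2 : S' * Hm' * Θ2 - S * Hm * Θ2 = (S' * Hm' - S * Hm) * Θ2 := by
    rw [Matrix.sub_mul]
  have e3 : frobNorm ((S' * Hm' - S * Hm) * Θ2) ≤ frobNorm (S' * Hm' - S * Hm) * ω :=
    le_trans (frobNorm_mul_le_spec_right _ _)
      (mul_le_mul_of_nonneg_left hΘ2 (frobNorm_nonneg _))
  have e4 : S' * Hm' - S * Hm = (S' - S) * Hm + S' * (Hm' - Hm) := by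
    rw [Matrix.sub_mul, Matrix.mul_sub]; abel
  have e5 : frobNorm (S' * Hm' - S * Hm)
      ≤ frobNorm ((S' - S) * Hm) + frobNorm (S' * (Hm' - Hm)) := by
    rw [e4]; exact frobNorm_add_le _ _
  have e6 : frobNorm ((S' - S) * Hm) ≤ frobNorm (S' - S) * (τ * (frobNorm X * ω)) :=
    le_trans (frobNorm_mul_le _ _)
      (mul_le_mul_of_nonneg_left hHmbound (frobNorm_nonneg _))
  have e7 : frobNorm (S' * (Hm' - Hm)) ≤ τ * (frobNorm (Xstar - S * X) * ω) := by
    calc frobNorm (S' * (Hm' - Hm)) ≤ specNorm S' * frobNorm (Hm' - Hm) :=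
          frobNorm_mul_le_spec_left _ _
      _ ≤ 1 * frobNorm (Hm' - Hm) :=
          mul_le_mul_of_nonneg_right hAstarRw (frobNorm_nonneg _)
      _ = frobNorm (Hm' - Hm) := one_mul _
      _ ≤ τ * (frobNorm (Xstar - S * X) * ω) := hHdiff
  have e8 : frobNorm (S' * Hm' - S * Hm)
      ≤ frobNorm (S' - S) * (τ * (frobNorm X * ω)) + τ * (frobNorm (Xstar - S * X) * ω) :=
    le_trans e5 (add_le_add e6 e7)
  calc frobNorm (Zstar - Z) ≤ τ * frobNorm (S' * Hm' * Θ2 - S * Hm * Θ2) := e1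
    _ = τ * frobNorm ((S' * Hm' - S * Hm) * Θ2) := by rw [e2]
    _ ≤ τ * (frobNorm (S' * Hm' - S * Hm) * ω) := mul_le_mul_of_nonneg_left e3 hτ
    _ ≤ τ * ((frobNorm (S' - S) * (τ * (frobNorm X * ω))
          + τ * (frobNorm (Xstar - S * X) * ω)) * ω) := by
        refine mul_le_mul_of_nonneg_left (mul_le_mul_of_nonneg_right e8 hω) hτ
    _ = τ ^ 2 * ω ^ 2 * (frobNorm (S' - S) * frobNorm X + frobNorm (Xstar - S * X)) := by
        ring
end

section
/- The Frobenius distance between the normalized adjacency matrices is controlled by the cross-class edges: ‖Ã*_rw − Ã_rw‖_F ≤ (1 + √N) · ‖Δ‖_F, where Δ := A − A*. -/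
open Matrix BigOperators Finset

lemma abs_le_rowNorm {n : Type*} [Fintype n] (v : n → ℝ) (i : n) : |v i| ≤ rowNorm v := by
  rw [← Real.sqrt_sq_eq_abs]
  exact Real.sqrt_le_sqrt (Finset.single_le_sum (fun j _ => sq_nonneg (v j)) (mem_univ i))

lemma rowNorm_le_specNorm {m n : Type*} [Fintype m] [Fintype n] [DecidableEq n]
    (M : Matrix m n ℝ) (i : m) : rowNorm (M i) ≤ specNorm M := by
  rcases eq_or_lt_of_le (rowNorm_nonneg (M i)) with h | h
  · rw [← h]; exact norm_nonneg _
  · have hv : rowNorm (M i) ^ 2 ≤ specNorm M * rowNorm (M i) := by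
      have key : (M *ᵥ M i) i = rowNorm (M i) ^ 2 := by
        have hnn : (0:ℝ) ≤ ∑ j, (M i j) ^ 2 := Finset.sum_nonneg fun j _ => sq_nonneg (M i j)
        simp only [Matrix.mulVec, dotProduct, rowNorm, Real.sq_sqrt hnn, ← sq]
      have h1 : |(M *ᵥ M i) i| ≤ ‖(WithLp.equiv 2 (m → ℝ)).symm (M *ᵥ M i)‖ := by
        rw [← rowNorm_eq_norm]; exact abs_le_rowNorm _ i
      have h2 : ‖(WithLp.equiv 2 (m → ℝ)).symm (M *ᵥ M i)‖ ≤ specNorm M * rowNorm (M i) := by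
        have := (LinearMap.toContinuousLinearMap (Matrix.toEuclideanLin M)).le_opNorm
          ((WithLp.equiv 2 (n → ℝ)).symm (M i))
        simpa [specNorm, rowNorm_eq_norm, WithLp.equiv_symm_apply, Matrix.toLpLin_toLp]
          using this
      calc rowNorm (M i) ^ 2 = (M *ᵥ M i) i := key.symm
        _ ≤ |(M *ᵥ M i) i| := le_abs_self _
        _ ≤ _ := h1.trans h2
    nlinarith [hv]

lemma rowNorm_smul_sub_smul {n : Type*} [Fintype n] (c e : ℝ) (hc : 0 ≤ c) (he : 0 ≤ e)
    (u w : n → ℝ) :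
    rowNorm (fun j => c * u j - e * w j) ≤ c * rowNorm u + e * rowNorm w := by
  have : (WithLp.equiv 2 (n → ℝ)).symm (fun j => c * u j - e * w j)
      = c • (WithLp.equiv 2 (n → ℝ)).symm u - e • (WithLp.equiv 2 (n → ℝ)).symm w := rfl
  rw [rowNorm_eq_norm, this, rowNorm_eq_norm, rowNorm_eq_norm]
  calc ‖c • (WithLp.equiv 2 (n → ℝ)).symm u - e • (WithLp.equiv 2 (n → ℝ)).symm w‖
      ≤ ‖c • (WithLp.equiv 2 (n → ℝ)).symm u‖ + ‖e • (WithLp.equiv 2 (n → ℝ)).symm w‖ :=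
        norm_sub_le _ _
    _ = c * ‖(WithLp.equiv 2 (n → ℝ)).symm u‖ + e * ‖(WithLp.equiv 2 (n → ℝ)).symm w‖ := by
        rw [norm_smul, norm_smul, Real.norm_eq_abs, Real.norm_eq_abs, abs_of_nonneg hc,
          abs_of_nonneg he]

/-- The Frobenius distance between the normalized adjacency matrices is controlled by the
cross-class edges: `‖Ã*_rw − Ã_rw‖_F ≤ (1 + √N)·‖Δ‖_F`. -/
theorem normalized_adjacency_discrepancy
    {N C : ℕ}
    (A : Matrix (Fin N) (Fin N) ℝ)
    (y : Fin N → Fin C)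
    (hA : ∀ i j, 0 ≤ A i j)
    (hAstarRw : specNorm (arw (astar A y)) ≤ 1) :
    frobNorm (arw (astar A y) - arw A) ≤
      (1 + Real.sqrt N) * frobNorm (A - astar A y) := by
  set S := arw (astar A y) with hS
  set Δ : Matrix (Fin N) (Fin N) ℝ := A - astar A y with hΔ
  have hΔnn : ∀ i j, 0 ≤ Δ i j := by
    intro i j
    simp only [hΔ, Matrix.sub_apply, astar, Matrix.of_apply]
    split <;> simp [hA i j]
  -- degrees
  have hds_nn : ∀ i, (0:ℝ) ≤ ∑ k, astar A y i k :=
    fun i => Finset.sum_nonneg fun k _ => by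
      simp only [astar, Matrix.of_apply]; split <;> simp [hA i k]
  have hd_nn : ∀ i, (0:ℝ) ≤ ∑ k, A i k :=
    fun i => Finset.sum_nonneg fun k _ => hA i k
  have hδ_nn : ∀ i, (0:ℝ) ≤ ∑ k, Δ i k :=
    fun i => Finset.sum_nonneg fun k _ => hΔnn i k
  have hdpos : ∀ i, (0:ℝ) < (∑ k, A i k) + 1 := fun i => by linarith [hd_nn i]
  have hdspos : ∀ i, (0:ℝ) < (∑ k, astar A y i k) + 1 := fun i => by linarith [hds_nn i]
  -- pointwise identity
  have key : ∀ i j, (S - arw A) i j =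
      ((∑ k, Δ i k) / ((∑ k, A i k) + 1)) * S i j - (1 / ((∑ k, A i k) + 1)) * Δ i j := by
    intro i j
    have hd := (hdpos i).ne'
    have hds := (hdspos i).ne'
    have hsum : (∑ k, Δ i k) = (∑ k, A i k) - ∑ k, astar A y i k := by
      simp [hΔ, Finset.sum_sub_distrib]
    have hΔij : Δ i j = A i j - astar A y i j := by simp [hΔ]
    simp only [Matrix.sub_apply, hS, arw, Matrix.of_apply, hsum, hΔij, Matrix.add_apply]
    generalize astar A y i j = as at *
    generalize A i j = a at *
    generalize (1 : Matrix (Fin N) (Fin N) ℝ) i j = e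
    generalize hq : (∑ k, A i k) = d at *
    generalize hq2 : (∑ k, astar A y i k) = ds at *
    field_simp
    ring
  -- per-row bound
  have rowB : ∀ i, rowNorm ((S - arw A) i) ≤ (1 + Real.sqrt N) * rowNorm (Δ i) := by
    intro i
    have hc : (0:ℝ) ≤ (∑ k, Δ i k) / ((∑ k, A i k) + 1) :=
      div_nonneg (hδ_nn i) (hdpos i).le
    have he : (0:ℝ) ≤ 1 / ((∑ k, A i k) + 1) := div_nonneg zero_le_one (hdpos i).le
    have h1 : rowNorm ((S - arw A) i) ≤
        ((∑ k, Δ i k) / ((∑ k, A i k) + 1)) * rowNorm (S i)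
          + (1 / ((∑ k, A i k) + 1)) * rowNorm (Δ i) := by
      have := rowNorm_smul_sub_smul _ _ hc he (S i) (Δ i)
      have heq : ((S - arw A) i) = fun j =>
          ((∑ k, Δ i k) / ((∑ k, A i k) + 1)) * S i j - (1 / ((∑ k, A i k) + 1)) * Δ i j :=
        funext fun j => key i j
      rw [heq]; exact this
    have hSrow : rowNorm (S i) ≤ 1 := (rowNorm_le_specNorm S i).trans hAstarRw
    have hδle : (∑ k, Δ i k) ≤ Real.sqrt N * rowNorm (Δ i) := by
      have hcs : ((∑ k, Δ i k))^2 ≤ (N:ℝ) * ∑ k, (Δ i k)^2 := by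
        have := sq_sum_le_card_mul_sum_sq (s := Finset.univ) (f := fun k => Δ i k)
        simpa using this
      calc (∑ k, Δ i k) = Real.sqrt ((∑ k, Δ i k)^2) := (Real.sqrt_sq (hδ_nn i)).symm
        _ ≤ Real.sqrt ((N:ℝ) * ∑ k, (Δ i k)^2) := Real.sqrt_le_sqrt hcs
        _ = Real.sqrt N * rowNorm (Δ i) := by
            rw [Real.sqrt_mul (Nat.cast_nonneg N)]; rfl
    have h2 : ((∑ k, Δ i k) / ((∑ k, A i k) + 1)) * rowNorm (S i) ≤
        Real.sqrt N * rowNorm (Δ i) := by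
      have hr : ((∑ k, Δ i k) / ((∑ k, A i k) + 1)) ≤ ∑ k, Δ i k := by
        rw [div_le_iff₀ (hdpos i)]
        nlinarith [hδ_nn i, hd_nn i]
      calc ((∑ k, Δ i k) / ((∑ k, A i k) + 1)) * rowNorm (S i)
          ≤ ((∑ k, Δ i k) / ((∑ k, A i k) + 1)) * 1 := by
            exact mul_le_mul_of_nonneg_left hSrow hc
        _ ≤ ∑ k, Δ i k := by rw [mul_one]; exact hr
        _ ≤ _ := hδle
    have h3 : (1 / ((∑ k, A i k) + 1)) * rowNorm (Δ i) ≤ rowNorm (Δ i) := by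
      have : (1 / ((∑ k, A i k) + 1)) ≤ 1 := by
        rw [div_le_one (hdpos i)]; linarith [hd_nn i]
      nlinarith [rowNorm_nonneg (Δ i)]
    calc rowNorm ((S - arw A) i) ≤ _ := h1
      _ ≤ Real.sqrt N * rowNorm (Δ i) + rowNorm (Δ i) := add_le_add h2 h3
      _ = (1 + Real.sqrt N) * rowNorm (Δ i) := by ring
  -- combine over rows
  have sqB : ∀ i, ∑ j, ((S - arw A) i j)^2 ≤ (1 + Real.sqrt N)^2 * ∑ j, (Δ i j)^2 := by
    intro i
    have h := rowB i
    have hnn1 : (0:ℝ) ≤ ∑ j, ((S - arw A) i j)^2 := Finset.sum_nonneg fun j _ => sq_nonneg _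
    have hnn2 : (0:ℝ) ≤ ∑ j, (Δ i j)^2 := Finset.sum_nonneg fun j _ => sq_nonneg _
    have hp := pow_le_pow_left₀ (rowNorm_nonneg ((S - arw A) i)) h 2
    rw [mul_pow] at hp
    calc ∑ j, ((S - arw A) i j)^2 = rowNorm ((S - arw A) i) ^ 2 :=
          (Real.sq_sqrt hnn1).symm
      _ ≤ (1 + Real.sqrt N)^2 * rowNorm (Δ i) ^ 2 := hp
      _ = (1 + Real.sqrt N)^2 * ∑ j, (Δ i j)^2 := by rw [rowNorm, Real.sq_sqrt hnn2]
  have hfin : ∑ i, ∑ j, ((S - arw A) i j)^2 ≤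
      (1 + Real.sqrt N)^2 * ∑ i, ∑ j, (Δ i j)^2 := by
    rw [Finset.mul_sum]
    exact Finset.sum_le_sum fun i _ => sqB i
  have h1N : (0:ℝ) ≤ 1 + Real.sqrt N := by positivity
  calc frobNorm (S - arw A) = Real.sqrt (∑ i, ∑ j, ((S - arw A) i j)^2) := rfl
    _ ≤ Real.sqrt ((1 + Real.sqrt N)^2 * ∑ i, ∑ j, (Δ i j)^2) := Real.sqrt_le_sqrt hfin
    _ = (1 + Real.sqrt N) * frobNorm Δ := by
        rw [Real.sqrt_mul (sq_nonneg _), Real.sqrt_sq h1N]; rfl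
end

section
/- The Frobenius norm of the feature misalignment is bounded by a pairwise weighted sum of feature differences: ‖X* − Ã_rw X‖_F ≤ Σ_{i=1}^{N} Σ_{j=1}^{N} | [Y P^{-1} Yᵀ]_{ij} − A_{ij}/(d_i + 1) | · ‖X_{i,:} − X_{j,:}‖₂, and consequently also ‖X* − Ã_rw X‖_F ≤ Σ_{c=1}^{C} Σ_{i=1}^{N} Σ_{j=1}^{N} | Y_{ic}·Y_{jc}/p_c − A_{ij}/(d_i + 1) | · ‖X_{i,:} − X_{j,:}‖₂. -/
open Matrix BigOperators Finset

lemma sqrt_sum_le {ι : Type*} (s : Finset ι) (f : ι → ℝ) (hf : ∀ i ∈ s, 0 ≤ f i) :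
    Real.sqrt (∑ i ∈ s, f i) ≤ ∑ i ∈ s, Real.sqrt (f i) := by
  have hnn : 0 ≤ ∑ i ∈ s, Real.sqrt (f i) :=
    Finset.sum_nonneg fun i _ => Real.sqrt_nonneg _
  have key : ∑ i ∈ s, f i ≤ (∑ i ∈ s, Real.sqrt (f i)) ^ 2 := by
    rw [sq, Finset.sum_mul_sum]
    refine Finset.sum_le_sum fun i hi => ?_
    calc f i = Real.sqrt (f i) * Real.sqrt (f i) :=
          (Real.mul_self_sqrt (hf i hi)).symm
      _ ≤ ∑ j ∈ s, Real.sqrt (f i) * Real.sqrt (f j) := by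
          refine Finset.single_le_sum (f := fun j => Real.sqrt (f i) * Real.sqrt (f j))
            (fun j _ => by positivity) hi
  calc Real.sqrt (∑ i ∈ s, f i) ≤ Real.sqrt ((∑ i ∈ s, Real.sqrt (f i)) ^ 2) :=
        Real.sqrt_le_sqrt key
    _ = ∑ i ∈ s, Real.sqrt (f i) := Real.sqrt_sq hnn

lemma rowNorm'_eq {n : Type*} [Fintype n] (v : n → ℝ) :
    Real.sqrt (∑ j, (v j) ^ 2) = ‖(WithLp.equiv 2 (n → ℝ)).symm v‖ := by
  rw [EuclideanSpace.norm_eq]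
  simp [sq_abs]

lemma rowNorm'_sum_le {ι n : Type*} [Fintype n] (s : Finset ι) (c : ι → ℝ) (g : ι → n → ℝ) :
    Real.sqrt (∑ m, (∑ j ∈ s, c j * g j m) ^ 2)
      ≤ ∑ j ∈ s, |c j| * Real.sqrt (∑ m, (g j m) ^ 2) := by
  have h : (WithLp.equiv 2 (n → ℝ)).symm (fun m => ∑ j ∈ s, c j * g j m)
      = ∑ j ∈ s, c j • (WithLp.equiv 2 (n → ℝ)).symm (g j) := by
    have := map_sum ((WithLp.linearEquiv 2 ℝ (n → ℝ)).symm)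
      (fun j => c j • g j) s
    simp only [_root_.map_smul] at this
    have harg : (∑ x ∈ s, c x • g x) = (fun m => ∑ j ∈ s, c j * g j m) := by
      ext m
      simp [Finset.sum_apply]
    rw [← harg]
    exact this
  calc Real.sqrt (∑ m, (∑ j ∈ s, c j * g j m) ^ 2)
      = ‖∑ j ∈ s, c j • (WithLp.equiv 2 (n → ℝ)).symm (g j)‖ := by
        rw [rowNorm'_eq, h]
    _ ≤ ∑ j ∈ s, ‖c j • (WithLp.equiv 2 (n → ℝ)).symm (g j)‖ := norm_sum_le _ _
    _ = ∑ j ∈ s, |c j| * Real.sqrt (∑ m, (g j m) ^ 2) := by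
        refine Finset.sum_congr rfl fun j _ => ?_
        rw [norm_smul, rowNorm'_eq]
        simp [Real.norm_eq_abs]

/-- The Frobenius norm of the feature misalignment is bounded by a pairwise weighted sum of
feature differences, in both the pairwise and the per-class triple-sum forms. -/
theorem feature_misalignment_bound
    {N M₀ C : ℕ}
    (A : Matrix (Fin N) (Fin N) ℝ) (X : Matrix (Fin N) (Fin M₀) ℝ)
    (y : Fin N → Fin C)
    (hA : ∀ i j, 0 ≤ A i j)
    (hclass : ∀ c : Fin C, ∃ i, y i = c) :
    let Y : Matrix (Fin N) (Fin C) ℝ := oneHot y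
    let p : Fin C → ℝ := fun c => ∑ i, Y i c
    let B : Matrix (Fin N) (Fin N) ℝ := Y * Matrix.diagonal (fun c => (p c)⁻¹) * Yᵀ
    let Xstar : Matrix (Fin N) (Fin M₀) ℝ := B * X
    let d : Fin N → ℝ := fun i => ∑ j, A i j
    frobNorm (Xstar - arw A * X) ≤
        (∑ i : Fin N, ∑ j : Fin N,
          |B i j - A i j / (d i + 1)| * rowNorm (fun m => X i m - X j m)) ∧
      frobNorm (Xstar - arw A * X) ≤
        ∑ c : Fin C, ∑ i : Fin N, ∑ j : Fin N,
          |Y i c * Y j c / p c - A i j / (d i + 1)| * rowNorm (fun m => X i m - X j m) := by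
  intro Y p B Xstar d
  -- basic positivity facts
  have hd0 : ∀ i, (0:ℝ) < d i + 1 := by
    intro i
    have : (0:ℝ) ≤ d i := Finset.sum_nonneg fun j _ => hA i j
    linarith
  have hp : ∀ c, (0:ℝ) < p c := by
    intro c
    obtain ⟨i₀, hi₀⟩ := hclass c
    have h1 : (1:ℝ) ≤ p c := by
      have hle := Finset.single_le_sum (f := fun i => Y i c)
        (fun i _ => by simp only [Y, oneHot, Matrix.of_apply]; positivity)
        (Finset.mem_univ i₀)
      have hY : Y i₀ c = 1 := by simp [Y, oneHot, hi₀]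
      have h2 : Y i₀ c ≤ p c := hle
      rw [hY] at h2
      exact h2
    linarith
  -- formula for B
  have hB : ∀ i j, B i j = ∑ c, Y i c * (p c)⁻¹ * Y j c := by
    intro i j
    show (Y * Matrix.diagonal (fun c => (p c)⁻¹) * Yᵀ) i j = _
    rw [Matrix.mul_apply]
    simp only [Matrix.mul_diagonal, Matrix.transpose_apply]
  have hBval : ∀ i j, B i j = Y i (y i) * (p (y i))⁻¹ * Y j (y i) := by
    intro i j
    rw [hB]
    refine Finset.sum_eq_single (y i) (fun c _ hc => ?_) (fun h => absurd (Finset.mem_univ _) h)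
    simp [Y, oneHot, Ne.symm hc]
  -- row sums
  have hBrow : ∀ i, ∑ j, B i j = 1 := by
    intro i
    have : ∀ j, B i j = Y j (y i) * (p (y i))⁻¹ := by
      intro j
      rw [hBval]
      simp only [Y, oneHot, Matrix.of_apply, if_pos rfl, if_true, one_mul]
      ring
    simp_rw [this]
    rw [← Finset.sum_mul]
    exact mul_inv_cancel₀ (hp (y i)).ne'
  -- entrywise formula for the misalignment
  have hE : ∀ i m, (Xstar - arw A * X) i m
      = ∑ j, (-(B i j - A i j / (d i + 1))) * (X i m - X j m) := by
    intro i m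
    have hexp : ∀ j, (-(B i j - A i j / (d i + 1))) * (X i m - X j m)
        = B i j * X j m - (A i j / (d i + 1)) * X j m
          - B i j * X i m + (A i j / (d i + 1)) * X i m := by
      intro j; ring
    have harwX : (arw A * X) i m
        = (∑ j, (A i j / (d i + 1)) * X j m) + X i m / (d i + 1) := by
      rw [Matrix.mul_apply]
      have : ∀ j, arw A i j * X j m
          = (A i j / (d i + 1)) * X j m
            + (if i = j then (1:ℝ) else 0) / (d i + 1) * X j m := by
        intro j
        simp only [arw, Matrix.of_apply, Matrix.add_apply, Matrix.one_apply]
        ring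
      simp_rw [this, Finset.sum_add_distrib]
      congr 1
      rw [Finset.sum_eq_single i (fun j _ hj => by simp [Ne.symm hj]) (fun h => absurd (Finset.mem_univ _) h)]
      rw [if_pos rfl]
      ring
    have hXstar : Xstar i m = ∑ j, B i j * X j m := Matrix.mul_apply
    simp_rw [hexp, Finset.sum_add_distrib, Finset.sum_sub_distrib]
    rw [Matrix.sub_apply, harwX, hXstar]
    rw [← Finset.sum_mul (f := fun j => B i j), hBrow i, ← Finset.sum_mul, ← Finset.sum_div]
    have hne : d i + 1 ≠ 0 := (hd0 i).ne'
    have hdi : (∑ j, A i j) = d i := rfl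
    rw [hdi]
    field_simp
    ring
  -- first (pairwise) bound
  have first : frobNorm (Xstar - arw A * X) ≤
      ∑ i : Fin N, ∑ j : Fin N,
        |B i j - A i j / (d i + 1)| * rowNorm (fun m => X i m - X j m) := by
    unfold frobNorm
    refine le_trans (sqrt_sum_le Finset.univ _ (fun i _ =>
      Finset.sum_nonneg fun m _ => sq_nonneg _)) ?_
    refine Finset.sum_le_sum fun i _ => ?_
    have hrw : ∀ m, ((Xstar - arw A * X) i m) ^ 2
        = (∑ j, (-(B i j - A i j / (d i + 1))) * (X i m - X j m)) ^ 2 := by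
      intro m; rw [hE]
    simp_rw [hrw]
    refine le_trans (rowNorm'_sum_le Finset.univ
      (fun j => -(B i j - A i j / (d i + 1))) (fun j m => X i m - X j m)) ?_
    refine le_of_eq (Finset.sum_congr rfl fun j _ => ?_)
    rw [abs_neg]
    rfl
  refine ⟨first, le_trans first ?_⟩
  -- pairwise sum ≤ per-class triple sum
  have hcomm : (∑ c : Fin C, ∑ i : Fin N, ∑ j : Fin N,
      |Y i c * Y j c / p c - A i j / (d i + 1)| * rowNorm (fun m => X i m - X j m))
      = ∑ i : Fin N, ∑ j : Fin N, ∑ c : Fin C,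
        |Y i c * Y j c / p c - A i j / (d i + 1)| * rowNorm (fun m => X i m - X j m) := by
    rw [Finset.sum_comm]
    exact Finset.sum_congr rfl fun i _ => Finset.sum_comm
  rw [hcomm]
  refine Finset.sum_le_sum fun i _ => ?_
  refine Finset.sum_le_sum fun j _ => ?_
  have hterm : |B i j - A i j / (d i + 1)| * rowNorm (fun m => X i m - X j m)
      = |Y i (y i) * Y j (y i) / p (y i) - A i j / (d i + 1)|
          * rowNorm (fun m => X i m - X j m) := by
    rw [hBval i j]
    ring_nf
  rw [hterm]
  refine Finset.single_le_sum (f := fun c =>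
    |Y i c * Y j c / p c - A i j / (d i + 1)| * rowNorm (fun m => X i m - X j m))
    (fun c _ => mul_nonneg (abs_nonneg _) (Real.sqrt_nonneg _)) (Finset.mem_univ (y i))
end

section
/- Let x ∈ ℝ^N with N ≥ 2, let i ≠ j be fixed distinct indices, let α := max_{k,ℓ} (x_k − x_ℓ)² and assume α > 0, and let μ := E[(x_{π(i)} − x_{π(j)})²] = (2/(N−1))·(‖x‖₂² − (1/N)(1ᵀx)²) be the expectation over a uniformly random permutation π of {1,…,N}. Then for every η > 0, P[ (x_{π(i)} − x_{π(j)})² − μ ≥ η ] ≤ exp( −η² / (2 N α²) ). -/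
open BigOperators Finset

private lemma exists_perm_two {N : ℕ} {a b a' b' : Fin N} (hab : a ≠ b) (hab' : a' ≠ b') :
    ∃ σ : Equiv.Perm (Fin N), σ a = a' ∧ σ b = b' := by
  refine ⟨(Equiv.swap a a').trans (Equiv.swap (Equiv.swap a a' b) b'), ?_, ?_⟩
  · simp only [Equiv.trans_apply, Equiv.swap_apply_left]
    refine Equiv.swap_apply_of_ne_of_ne ?_ hab'
    intro h
    exact hab ((Equiv.swap a a').injective ((Equiv.swap_apply_left a a').trans h))
  · simp [Equiv.trans_apply]

private lemma card_fiber_eq {N : ℕ} (i j : Fin N) {a b a' b' : Fin N}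
    (hab : a ≠ b) (hab' : a' ≠ b') :
    (univ.filter fun π : Equiv.Perm (Fin N) => π i = a ∧ π j = b).card =
    (univ.filter fun π : Equiv.Perm (Fin N) => π i = a' ∧ π j = b').card := by
  classical
  obtain ⟨σ, hσa, hσb⟩ := exists_perm_two hab hab'
  apply Finset.card_bij (fun π _ => σ * π)
  · intro π hπ
    simp only [mem_filter, mem_univ, true_and] at hπ ⊢
    simp [Equiv.Perm.mul_apply, hπ.1, hπ.2, hσa, hσb]
  · intro π₁ _ π₂ _ h
    exact mul_left_cancel h
  · intro π' h'
    simp only [mem_filter, mem_univ, true_and] at h'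
    refine ⟨σ⁻¹ * π', ?_, ?_⟩
    · simp only [mem_filter, mem_univ, true_and, Equiv.Perm.mul_apply]
      constructor
      · rw [h'.1, ← hσa]; simp
      · rw [h'.2, ← hσb]; simp
    · simp [← mul_assoc]

private lemma analytic_bound {μ η α NR : ℝ} (hμ0 : 0 ≤ μ) (hη : 0 < η) (hαpos : 0 < α)
    (hN' : 2 ≤ NR) (hcase : μ + η ≤ α) :
    μ / (μ + η) ≤ Real.exp (-η ^ 2 / (2 * NR * α ^ 2)) := by
  have hμη : 0 < μ + η := by linarith
  have hηα : η ≤ α := by linarith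
  set s : ℝ := η ^ 2 / (2 * NR * α ^ 2) with hsdef
  have hsexp : 1 - s ≤ Real.exp (-s) := by
    have := Real.add_one_le_exp (-s)
    linarith
  have hDpos : (0:ℝ) < 2 * NR * α ^ 2 := by positivity
  have hkey : (μ + η) * s ≤ η := by
    rw [hsdef, ← mul_div_assoc, div_le_iff₀ hDpos]
    nlinarith [mul_nonneg (mul_nonneg hη.le hαpos.le) (sub_nonneg.mpr hηα),
      mul_nonneg (sq_nonneg η) (sub_nonneg.mpr hcase),
      mul_nonneg (mul_nonneg hη.le (sq_nonneg α)) (by linarith : (0:ℝ) ≤ 2*NR-1)]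
  have h4 : (μ + η) * (1 - s) ≤ (μ + η) * Real.exp (-s) :=
    mul_le_mul_of_nonneg_left hsexp (by linarith)
  have h5 : μ ≤ (μ + η) * (1 - s) := by nlinarith
  have hexp_eq : Real.exp (-η ^ 2 / (2 * NR * α ^ 2)) = Real.exp (-s) := by
    rw [hsdef, neg_div]
  rw [hexp_eq, div_le_iff₀ hμη]
  calc μ ≤ (μ + η) * Real.exp (-s) := by linarith
    _ = Real.exp (-s) * (μ + η) := mul_comm _ _

/-- Azuma–Hoeffding tail bound for `ψ(π) = (x_{π(i)} − x_{π(j)})²` over a uniformly random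
permutation `π`: `P[ψ(π) − μ ≥ η] ≤ exp(−η²/(2Nα²))`. -/
theorem azuma_perm_tail_bound
    {N : ℕ} (hN : 2 ≤ N) (x : Fin N → ℝ) (i j : Fin N) (hij : i ≠ j)
    (α : ℝ) (hα : α = ⨆ k : Fin N, ⨆ ℓ : Fin N, (x k - x ℓ) ^ 2) (hαpos : 0 < α)
    (μ : ℝ)
    (hμ : μ = (2 / ((N : ℝ) - 1)) * ((∑ k, (x k) ^ 2) - (1 / N) * (∑ k, x k) ^ 2)) :
    ∀ η : ℝ, 0 < η →
      (Nat.card {π : Equiv.Perm (Fin N) // η ≤ (x (π i) - x (π j)) ^ 2 - μ} : ℝ) /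
          (Fintype.card (Equiv.Perm (Fin N))) ≤
        Real.exp (-η ^ 2 / (2 * N * α ^ 2)) := by
  classical
  intro η hη
  have hN' : (2:ℝ) ≤ (N:ℝ) := by exact_mod_cast hN
  have hNpos : (0:ℝ) < N := by linarith
  have hN1 : (N:ℝ) - 1 ≠ 0 := by intro h; nlinarith
  have hN0 : (N:ℝ) ≠ 0 := ne_of_gt hNpos
  -- ψ ≤ α
  have hψ_le : ∀ π : Equiv.Perm (Fin N), (x (π i) - x (π j)) ^ 2 ≤ α := by
    intro π
    rw [hα]
    have bdd : ∀ k : Fin N, BddAbove (Set.range fun ℓ => (x k - x ℓ) ^ 2) :=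
      fun k => Set.Finite.bddAbove (Set.finite_range _)
    calc (x (π i) - x (π j)) ^ 2 ≤ ⨆ ℓ, (x (π i) - x ℓ) ^ 2 := le_ciSup (bdd _) (π j)
      _ ≤ ⨆ k, ⨆ ℓ, (x k - x ℓ) ^ 2 :=
          le_ciSup (f := fun k => ⨆ ℓ, (x k - x ℓ) ^ 2)
            (Set.Finite.bddAbove (Set.finite_range _)) (π i)
  -- fiber structure
  set c : ℕ := (univ.filter fun π : Equiv.Perm (Fin N) => π i = i ∧ π j = j).card with hc
  have himg : (univ : Finset (Equiv.Perm (Fin N))).image (fun π => (π i, π j)) =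
      (univ : Finset (Fin N)).offDiag := by
    ext p
    simp only [mem_image, mem_univ, true_and, Finset.mem_offDiag]
    constructor
    · rintro ⟨π, rfl⟩
      intro h
      exact hij (π.injective h)
    · intro hp
      obtain ⟨σ, h1, h2⟩ := exists_perm_two hij hp
      exact ⟨σ, by rw [h1, h2]⟩
  have hfib : ∀ p ∈ (univ : Finset (Fin N)).offDiag,
      (univ.filter fun π : Equiv.Perm (Fin N) => (π i, π j) = p).card = c := by
    intro p hp
    rw [Finset.mem_offDiag] at hp
    have heq : (univ.filter fun π : Equiv.Perm (Fin N) => (π i, π j) = p)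
        = univ.filter fun π : Equiv.Perm (Fin N) => π i = p.1 ∧ π j = p.2 := by
      apply Finset.filter_congr
      intro π _
      simp [Prod.ext_iff]
    rw [heq, hc]
    exact card_fiber_eq i j hp.2.2 hij
  -- sum of ψ over all permutations
  have hsum : ∑ π : Equiv.Perm (Fin N), (x (π i) - x (π j)) ^ 2
      = (c : ℝ) * ∑ p ∈ (univ : Finset (Fin N)).offDiag, (x p.1 - x p.2) ^ 2 := by
    have h := Finset.sum_comp (s := (univ : Finset (Equiv.Perm (Fin N))))
      (fun p : Fin N × Fin N => (x p.1 - x p.2) ^ 2)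
      (fun π : Equiv.Perm (Fin N) => (π i, π j))
    rw [h, himg, Finset.sum_congr rfl (fun p hp => by rw [hfib p hp]), ← Finset.smul_sum,
      nsmul_eq_mul]
  -- total count
  have htot : (Fintype.card (Equiv.Perm (Fin N)) : ℝ) = ((N:ℝ) * N - N) * c := by
    have h1 : Fintype.card (Equiv.Perm (Fin N)) = (univ : Finset (Fin N)).offDiag.card * c := by
      rw [← Finset.card_univ,
        Finset.card_eq_sum_card_fiberwise
          (f := fun π : Equiv.Perm (Fin N) => (π i, π j))
          (t := (univ : Finset (Fin N)).offDiag)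
          (fun π _ => by rw [← himg]; exact mem_image_of_mem _ (mem_univ π)),
        Finset.sum_congr rfl hfib, Finset.sum_const, smul_eq_mul]
    have h2 : (univ : Finset (Fin N)).offDiag.card = N * N - N := by
      rw [Finset.offDiag_card, Finset.card_univ, Fintype.card_fin]
    have hle : N ≤ N * N := Nat.le_mul_of_pos_left N (by omega)
    rw [h1, h2, Nat.cast_mul, Nat.cast_sub hle, Nat.cast_mul]
  -- pair sum
  have hT : ∑ p ∈ (univ : Finset (Fin N)).offDiag, (x p.1 - x p.2) ^ 2
      = 2 * N * (∑ k, x k ^ 2) - 2 * (∑ k, x k) ^ 2 := by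
    have h0 : ∑ p ∈ (univ : Finset (Fin N)).offDiag, (x p.1 - x p.2) ^ 2
        = ∑ p ∈ (univ : Finset (Fin N)) ×ˢ univ, (x p.1 - x p.2) ^ 2 := by
      rw [show (univ : Finset (Fin N)).offDiag = (univ ×ˢ univ).filter (fun a : Fin N × Fin N => a.1 ≠ a.2) from by ext; simp]
      apply Finset.sum_filter_of_ne
      intro p _ hne
      intro h
      rw [h] at hne
      simp at hne
    rw [h0, Finset.sum_product]
    have hexp : ∀ a : Fin N, ∑ b : Fin N, (x a - x b) ^ 2
        = (N : ℝ) * x a ^ 2 - 2 * x a * (∑ k, x k) + ∑ k, x k ^ 2 := by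
      intro a
      have : ∀ b, (x a - x b) ^ 2 = x a ^ 2 - 2 * x a * x b + x b ^ 2 := fun b => by ring
      simp_rw [this, Finset.sum_add_distrib, Finset.sum_sub_distrib, ← Finset.mul_sum,
        Finset.sum_const, Finset.card_univ, Fintype.card_fin, nsmul_eq_mul]
    simp_rw [hexp, Finset.sum_add_distrib, Finset.sum_sub_distrib, ← Finset.mul_sum,
      Finset.sum_const, Finset.card_univ, Fintype.card_fin, nsmul_eq_mul, ← Finset.sum_mul]
    rw [← Finset.mul_sum]
    ring
  -- key : total sum = card * μ
  have key : ∑ π : Equiv.Perm (Fin N), (x (π i) - x (π j)) ^ 2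
      = (Fintype.card (Equiv.Perm (Fin N)) : ℝ) * μ := by
    rw [hsum, hT, htot, hμ]
    field_simp
  have hcardpos : (0:ℝ) < (Fintype.card (Equiv.Perm (Fin N)) : ℝ) := by
    exact_mod_cast Fintype.card_pos
  -- μ ≥ 0
  have hμ0 : 0 ≤ μ := by
    have hs : 0 ≤ ∑ π : Equiv.Perm (Fin N), (x (π i) - x (π j)) ^ 2 :=
      Finset.sum_nonneg fun π _ => sq_nonneg _
    rw [key] at hs
    exact nonneg_of_mul_nonneg_right hs hcardpos
  -- the event as a filter
  set E : Finset (Equiv.Perm (Fin N)) :=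
    univ.filter (fun π => η ≤ (x (π i) - x (π j)) ^ 2 - μ) with hE
  have hcard : (Nat.card {π : Equiv.Perm (Fin N) // η ≤ (x (π i) - x (π j)) ^ 2 - μ} : ℝ)
      = (E.card : ℝ) := by
    rw [Nat.card_eq_fintype_card, Fintype.card_subtype]
  rw [hcard]
  by_cases hcase : α < μ + η
  · have hEempty : E = ∅ := by
      apply Finset.eq_empty_of_forall_notMem
      intro π hπ
      rw [hE, mem_filter] at hπ
      have := hψ_le π
      linarith [hπ.2]
    rw [hEempty]
    simpa using (Real.exp_pos _).le
  · push_neg at hcase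
    have hμη : 0 < μ + η := by linarith
    -- Markov
    have h1 : (E.card : ℝ) * (μ + η) ≤ ∑ π ∈ E, (x (π i) - x (π j)) ^ 2 := by
      calc (E.card : ℝ) * (μ + η) = ∑ _π ∈ E, (μ + η) := by rw [Finset.sum_const, nsmul_eq_mul]
        _ ≤ ∑ π ∈ E, (x (π i) - x (π j)) ^ 2 := by
            apply Finset.sum_le_sum
            intro π hπ
            rw [hE, mem_filter] at hπ
            linarith [hπ.2]
    have h2 : ∑ π ∈ E, (x (π i) - x (π j)) ^ 2
        ≤ ∑ π : Equiv.Perm (Fin N), (x (π i) - x (π j)) ^ 2 :=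
      Finset.sum_le_sum_of_subset_of_nonneg (Finset.subset_univ E)
        (fun π _ _ => sq_nonneg _)
    have hmarkov : (E.card : ℝ) * (μ + η) ≤ (Fintype.card (Equiv.Perm (Fin N)) : ℝ) * μ := by
      rw [← key]; linarith
    have hLHS : (E.card : ℝ) / (Fintype.card (Equiv.Perm (Fin N)) : ℝ) ≤ μ / (μ + η) := by
      rw [div_le_div_iff₀ hcardpos hμη]
      nlinarith
    exact hLHS.trans (analytic_bound hμ0 hη hαpos hN' hcase)
end

section
/- Let X ∈ ℝ^{N×M} with N ≥ 2, let X̃ be the row permutation of X by a uniformly random permutation π (X̃_{i,:} := X_{π(i),:}), let α := max_{m ∈ {1,…,M}} max_{k,ℓ ∈ {1,…,N}} (X_{km} − X_{ℓm})² and assume α > 0, and fix distinct indices i ≠ j and t > 0. Then with probability at least 1 − M·exp(−t²/2) over π, ‖X̃_{i,:} − X̃_{j,:}‖₂² ≤ (2/(N−1))·( ‖X‖_F² − (1/N)·‖Xᵀ1‖₂² ) + α · t · M · √N. -/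
open Matrix BigOperators Finset

lemma exists_perm_pair {β : Type*} [DecidableEq β] {k l k' l' : β} (hkl : k ≠ l) (h' : k' ≠ l') :
    ∃ σ : Equiv.Perm β, σ k = k' ∧ σ l = l' := by
  refine ⟨(Equiv.swap k k').trans (Equiv.swap ((Equiv.swap k k') l) l'), ?_, ?_⟩
  · simp only [Equiv.trans_apply, Equiv.swap_apply_left]
    apply Equiv.swap_apply_of_ne_of_ne
    · intro h
      have hl : l = k := by
        have := congrArg (Equiv.swap k k') h.symm
        simpa using this
      exact hkl hl.symm
    · exact h'
  · simp [Equiv.trans_apply]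

lemma fiber_card_eq {N : ℕ} {i j : Fin N} {k l k' l' : Fin N} (hkl : k ≠ l) (h' : k' ≠ l') :
    (univ.filter (fun π : Equiv.Perm (Fin N) => π i = k ∧ π j = l)).card =
    (univ.filter (fun π : Equiv.Perm (Fin N) => π i = k' ∧ π j = l')).card := by
  obtain ⟨σ, hk, hl⟩ := exists_perm_pair hkl h'
  refine Finset.card_bij' (fun π _ => π.trans σ) (fun π _ => π.trans σ.symm) ?_ ?_ ?_ ?_
  · intro π hπ
    simp only [mem_filter, mem_univ, true_and] at hπ ⊢
    simp [Equiv.trans_apply, hπ.1, hπ.2, hk, hl]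
  · intro π hπ
    simp only [mem_filter, mem_univ, true_and] at hπ ⊢
    refine ⟨?_, ?_⟩
    · simp only [Equiv.trans_apply, hπ.1, ← hk, Equiv.symm_apply_apply]
    · simp only [Equiv.trans_apply, hπ.2, ← hl, Equiv.symm_apply_apply]
  · intro π _; ext x; simp
  · intro π _; ext x; simp

lemma sum_perm_eq {N : ℕ} {i j : Fin N} (hij : i ≠ j) (g : Fin N → Fin N → ℝ) :
    ∑ π : Equiv.Perm (Fin N), g (π i) (π j) =
      ((univ.filter (fun π : Equiv.Perm (Fin N) => π i = i ∧ π j = j)).card : ℝ) *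
        ∑ p ∈ (univ : Finset (Fin N)).offDiag, g p.1 p.2 := by
  have hmaps : ∀ π ∈ (univ : Finset (Equiv.Perm (Fin N))),
      ((π i, π j) : Fin N × Fin N) ∈ (univ : Finset (Fin N)).offDiag := by
    intro π _
    simp only [Finset.mem_offDiag, mem_univ, true_and]
    exact fun h => hij (π.injective h)
  rw [← Finset.sum_fiberwise_of_maps_to' hmaps (fun p : Fin N × Fin N => g p.1 p.2)]
  rw [Finset.mul_sum]
  refine Finset.sum_congr rfl ?_
  intro p hp
  rw [Finset.sum_const, nsmul_eq_mul]
  congr 2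
  have hpd : p.1 ≠ p.2 := (Finset.mem_offDiag.1 hp).2.2
  rw [Finset.filter_congr (fun π _ => by simp [Prod.ext_iff] :
    ∀ π ∈ (univ : Finset (Equiv.Perm (Fin N))), ((π i, π j) = p ↔ π i = p.1 ∧ π j = p.2))]
  exact (fiber_card_eq hij hpd).symm


lemma offdiag_sq_sum {N : ℕ} (a : Fin N → ℝ) :
    ∑ p ∈ (univ : Finset (Fin N)).offDiag, (a p.1 - a p.2)^2
      = 2*N*(∑ k, a k^2) - 2*(∑ k, a k)^2 := by
  have hsub : (univ : Finset (Fin N)).offDiag ⊆ univ ×ˢ univ := by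
    intro p hp; simp
  have h1 : ∑ p ∈ (univ : Finset (Fin N)).offDiag, (a p.1 - a p.2)^2
      = ∑ p ∈ (univ ×ˢ univ : Finset (Fin N × Fin N)), (a p.1 - a p.2)^2 := by
    refine Finset.sum_subset hsub ?_
    intro p _ hp
    have : p.1 = p.2 := by
      by_contra h
      exact hp (Finset.mem_offDiag.2 ⟨mem_univ _, mem_univ _, h⟩)
    rw [this]; ring
  rw [h1, Finset.sum_product]
  have expand : ∀ k l, (a k - a l)^2 = a k^2 + a l^2 - 2*(a k * a l) := by intro k l; ring
  simp only [expand]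
  simp only [Finset.sum_add_distrib, Finset.sum_sub_distrib, Finset.sum_const,
    Finset.card_univ, Fintype.card_fin, nsmul_eq_mul, ← Finset.mul_sum, ← Finset.sum_mul]
  ring

set_option maxHeartbeats 1000000 in
/-- Union bound over the `M` features: with probability at least `1 − M·exp(−t²/2)` over a
uniformly random permutation `π`, the squared distance between permuted rows `i` and `j` is
bounded by `(2/(N−1))(‖X‖_F² − (1/N)‖Xᵀ1‖₂²) + α t M √N`. -/
theorem perm_row_distance_bound
    {N M : ℕ} (hN : 2 ≤ N) (X : Matrix (Fin N) (Fin M) ℝ)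
    (i j : Fin N) (hij : i ≠ j) (t : ℝ) (ht : 0 < t)
    (α : ℝ)
    (hα : α = ⨆ m : Fin M, ⨆ k : Fin N, ⨆ ℓ : Fin N, (X k m - X ℓ m) ^ 2)
    (hαpos : 0 < α) :
    1 - M * Real.exp (-t ^ 2 / 2) ≤
      (Nat.card {π : Equiv.Perm (Fin N) //
          rowNorm (fun m => X (π i) m - X (π j) m) ^ 2 ≤
            (2 / ((N : ℝ) - 1)) *
                (frobNorm X ^ 2 - (1 / N) * rowNorm (fun m => ∑ k, X k m) ^ 2) +
              α * t * M * Real.sqrt N} : ℝ) /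
        (Fintype.card (Equiv.Perm (Fin N))) := by
  classical
  -- basic positivity facts
  have hM : 0 < M := by
    rcases Nat.eq_zero_or_pos M with h | h
    · exfalso
      subst h
      rw [show (⨆ m : Fin 0, ⨆ k : Fin N, ⨆ ℓ : Fin N, (X k m - X ℓ m) ^ 2) = 0 by
        rw [iSup_of_empty', Real.sSup_empty]] at hα
      exact absurd (hα ▸ hαpos) (lt_irrefl 0)
    · exact h
  have hMR : (1:ℝ) ≤ M := by exact_mod_cast hM
  have hNR : (2:ℝ) ≤ (N:ℝ) := by exact_mod_cast hN
  have hN0 : (0:ℝ) < N := by linarith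
  have hN1 : (0:ℝ) < (N:ℝ) - 1 := by linarith
  have hsqN : Real.sqrt N ^ 2 = N := Real.sq_sqrt hN0.le
  have hsqNpos : 0 < Real.sqrt N := Real.sqrt_pos.2 hN0
  set e := Real.exp (-t ^ 2 / 2) with he
  have hepos : 0 < e := Real.exp_pos _
  -- the bound α on squared differences
  have hbound : ∀ (m : Fin M) (k l : Fin N), (X k m - X l m)^2 ≤ α := by
    intro m k l
    rw [hα]
    have h1 : (X k m - X l m)^2 ≤ ⨆ ℓ : Fin N, (X k m - X ℓ m)^2 :=
      le_ciSup (f := fun ℓ : Fin N => (X k m - X ℓ m)^2)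
        (Set.Finite.bddAbove (Set.finite_range _)) l
    have h2 : (⨆ ℓ : Fin N, (X k m - X ℓ m)^2) ≤
        ⨆ k' : Fin N, ⨆ ℓ : Fin N, (X k' m - X ℓ m)^2 :=
      le_ciSup (f := fun k' : Fin N => ⨆ ℓ : Fin N, (X k' m - X ℓ m)^2)
        (Set.Finite.bddAbove (Set.finite_range _)) k
    have h3 : (⨆ k' : Fin N, ⨆ ℓ : Fin N, (X k' m - X ℓ m)^2) ≤
        ⨆ m' : Fin M, ⨆ k' : Fin N, ⨆ ℓ : Fin N, (X k' m' - X ℓ m')^2 :=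
      le_ciSup (f := fun m' : Fin M => ⨆ k' : Fin N, ⨆ ℓ : Fin N, (X k' m' - X ℓ m')^2)
        (Set.Finite.bddAbove (Set.finite_range _)) m
    exact le_trans h1 (le_trans h2 h3)
  -- notation
  set Y : Equiv.Perm (Fin N) → ℝ := fun π => ∑ m, (X (π i) m - X (π j) m)^2 with hY
  set mean : ℝ := (2 / ((N : ℝ) - 1)) *
      (frobNorm X ^ 2 - (1 / N) * rowNorm (fun m => ∑ k, X k m) ^ 2) with hmean
  set s : ℝ := α * t * M * Real.sqrt N with hs
  have hspos : 0 < s := by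
    apply mul_pos (mul_pos (mul_pos hαpos ht) (by exact_mod_cast hM)) hsqNpos
  have hrow : ∀ π : Equiv.Perm (Fin N),
      rowNorm (fun m => X (π i) m - X (π j) m) ^ 2 = Y π := by
    intro π
    exact Real.sq_sqrt (Finset.sum_nonneg fun m _ => sq_nonneg _)
  -- event as predicate on Y
  have hEvent : ∀ π : Equiv.Perm (Fin N),
      (rowNorm (fun m => X (π i) m - X (π j) m) ^ 2 ≤
        (2 / ((N : ℝ) - 1)) *
          (frobNorm X ^ 2 - (1 / N) * rowNorm (fun m => ∑ k, X k m) ^ 2) +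
            α * t * M * Real.sqrt N) ↔ Y π ≤ mean + s := by
    intro π
    rw [hrow π]
  -- pointwise bound Y π ≤ α * M
  have hYle : ∀ π, Y π ≤ α * M := by
    intro π
    calc Y π ≤ ∑ _m : Fin M, α := Finset.sum_le_sum fun m _ => hbound m (π i) (π j)
    _ = α * M := by simp [mul_comm]
  have hYnn : ∀ π, 0 ≤ Y π := fun π => Finset.sum_nonneg fun m _ => sq_nonneg _
  -- the key expectation identity
  set c : ℕ := (univ.filter (fun π : Equiv.Perm (Fin N) => π i = i ∧ π j = j)).card with hc
  set K : ℝ := (Fintype.card (Equiv.Perm (Fin N)) : ℝ) with hK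
  have hKpos : 0 < K := by
    rw [hK]; exact_mod_cast Fintype.card_pos
  have hod : (((univ : Finset (Fin N)).offDiag.card : ℕ) : ℝ) = (N:ℝ) * ((N:ℝ) - 1) := by
    rw [Finset.offDiag_card]
    simp only [Finset.card_univ, Fintype.card_fin]
    have : N ≤ N * N := Nat.le_mul_of_pos_left N (by omega)
    push_cast [Nat.cast_sub this]
    ring
  have hcount : K = c * ((N:ℝ) * ((N:ℝ) - 1)) := by
    have h1 := sum_perm_eq hij (fun _ _ => (1:ℝ))
    simp only [Finset.sum_const, nsmul_eq_mul, mul_one] at h1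
    have h2 : (((univ : Finset (Equiv.Perm (Fin N))).card : ℕ) : ℝ) = K := by
      rw [hK, Finset.card_univ]
    rw [← h2, h1, hod, hc]
  have hoffdiag : ∑ p ∈ (univ : Finset (Fin N)).offDiag, (∑ m, (X p.1 m - X p.2 m)^2)
      = ((N:ℝ) * ((N:ℝ) - 1)) * mean := by
    rw [Finset.sum_comm]
    have hterm : ∀ m : Fin M, ∑ p ∈ (univ : Finset (Fin N)).offDiag, (X p.1 m - X p.2 m)^2
        = 2*N*(∑ k, X k m^2) - 2*(∑ k, X k m)^2 := fun m => offdiag_sq_sum (fun k => X k m)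
    simp only [hterm]
    rw [Finset.sum_sub_distrib]
    simp only [← Finset.mul_sum]
    have hfro : frobNorm X ^ 2 = ∑ m : Fin M, ∑ k : Fin N, X k m ^ 2 := by
      exact (Real.sq_sqrt (Finset.sum_nonneg fun _ _ =>
        Finset.sum_nonneg fun _ _ => sq_nonneg _)).trans Finset.sum_comm
    have hcol : rowNorm (fun m => ∑ k, X k m) ^ 2 = ∑ m : Fin M, (∑ k, X k m)^2 :=
      Real.sq_sqrt (Finset.sum_nonneg fun _ _ => sq_nonneg _)
    rw [hmean, hfro, hcol]
    field_simp
  have hsum : ∑ π : Equiv.Perm (Fin N), Y π = K * mean := by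
    have h1 := sum_perm_eq hij (fun k l => ∑ m, (X k m - X l m)^2)
    rw [hY]
    rw [h1, hoffdiag, hcount]
    ring
  -- mean bounds
  have hmean_nn : 0 ≤ mean := by
    have h1 : 0 ≤ ∑ π : Equiv.Perm (Fin N), Y π :=
      Finset.sum_nonneg fun π _ => hYnn π
    rw [hsum] at h1
    exact nonneg_of_mul_nonneg_right h1 hKpos
  have hmean_le : mean ≤ α * M := by
    have h1 : ∑ π : Equiv.Perm (Fin N), Y π ≤ ∑ _π : Equiv.Perm (Fin N), α * M :=
      Finset.sum_le_sum fun π _ => hYle π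
    rw [hsum, Finset.sum_const, nsmul_eq_mul, Finset.card_univ, ← hK] at h1
    exact le_of_mul_le_mul_left (by linarith [mul_comm K mean, mul_comm K (α*M)]) hKpos
  -- cardinality bookkeeping
  have hNatcard : (Nat.card {π : Equiv.Perm (Fin N) //
      rowNorm (fun m => X (π i) m - X (π j) m) ^ 2 ≤
        (2 / ((N : ℝ) - 1)) *
          (frobNorm X ^ 2 - (1 / N) * rowNorm (fun m => ∑ k, X k m) ^ 2) +
            α * t * M * Real.sqrt N} : ℕ) =
      (univ.filter (fun π : Equiv.Perm (Fin N) => Y π ≤ mean + s)).card := by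
    rw [Nat.card_eq_fintype_card, Fintype.card_subtype]
    congr 1
    apply Finset.filter_congr
    intro π _
    exact hEvent π
  rw [hNatcard]
  set G := univ.filter (fun π : Equiv.Perm (Fin N) => Y π ≤ mean + s) with hG
  set B := univ.filter (fun π : Equiv.Perm (Fin N) => ¬ (Y π ≤ mean + s)) with hB
  have hGB : (G.card : ℝ) + (B.card : ℝ) = K := by
    have hnat : G.card + B.card = Fintype.card (Equiv.Perm (Fin N)) := by
      rw [hG, hB, Finset.card_filter_add_card_filter_not, Finset.card_univ]
    rw [hK]
    exact_mod_cast hnat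
  suffices hBle : (B.card : ℝ) ≤ K * ((M:ℝ) * e) by
    rw [le_div_iff₀ hKpos]
    nlinarith [hGB, hBle]
  by_cases hcase : 1 ≤ t * Real.sqrt N
  · -- deterministic case: no bad permutation
    have hBempty : B = ∅ := by
      rw [hB, Finset.filter_eq_empty_iff]
      intro π _
      intro hcon
      apply hcon
      have h1 : α * M ≤ s := by
        have hαM : (0:ℝ) ≤ α * M := by positivity
        calc α*(M:ℝ) = α*M*1 := by ring
        _ ≤ α*M*(t*Real.sqrt N) := mul_le_mul_of_nonneg_left hcase hαM
        _ = s := by rw [hs]; ring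
      linarith [hYle π, hmean_nn]
    rw [hBempty]
    simp only [Finset.card_empty, Nat.cast_zero]
    positivity
  · push_neg at hcase
    set u := t * Real.sqrt N with hu
    have hu0 : 0 < u := mul_pos ht hsqNpos
    have hu1 : u < 1 := hcase
    have hu2 : u^2 = t^2 * N := by rw [hu, mul_pow, hsqN]
    have ht2 : t^2 * 2 ≤ u^2 := by
      rw [hu2]
      have := mul_le_mul_of_nonneg_left hNR (sq_nonneg t)
      linarith
    have hexp : 1 - u^2/4 ≤ e := by
      have h := Real.add_one_le_exp (-t^2/2)
      rw [he]
      linarith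
    have husq : u^2 ≤ u := by
      have h := mul_le_mul_of_nonneg_left hu1.le hu0.le
      calc u^2 = u * u := sq u
      _ ≤ u * 1 := h
      _ = u := mul_one u
    have hcube : u^3 ≤ u := by
      have h := mul_le_mul_of_nonneg_left husq hu0.le
      calc u^3 = u * u^2 := by ring
      _ ≤ u * u := h
      _ = u^2 := (sq u).symm
      _ ≤ u := husq
    have hfac : 1 ≤ (1+u)*(1-u^2/4) := by
      have hexpand : (1+u)*(1-u^2/4) = 1 + u - u^2/4 - u^3/4 := by ring
      rw [hexpand]
      linarith
    have hkey : 1 ≤ (1+u)*e := by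
      have hmul := mul_le_mul_of_nonneg_left hexp (by linarith : (0:ℝ) ≤ 1+u)
      linarith
    -- Markov inequality
    have hBsum : (B.card : ℝ) * (mean + s) ≤ K * mean := by
      have h1 : ∑ _π ∈ B, (mean + s) ≤ ∑ π ∈ B, Y π := by
        refine Finset.sum_le_sum fun π hπ => ?_
        have h := (Finset.mem_filter.1 hπ).2
        exact (not_le.1 h).le
      have h2 : ∑ π ∈ B, Y π ≤ ∑ π : Equiv.Perm (Fin N), Y π :=
        Finset.sum_le_sum_of_subset_of_nonneg (Finset.subset_univ B) fun π _ _ => hYnn π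
      rw [Finset.sum_const, nsmul_eq_mul] at h1
      rw [hsum] at h2
      linarith
    have hs_eq : s = (α*M)*u := by rw [hs, hu]; ring
    have key2 : α * M ≤ (α*M + s) * ((M:ℝ)*e) := by
      have hMe : e ≤ (M:ℝ)*e := by
        have := mul_le_mul_of_nonneg_right hMR hepos.le
        linarith
      have hαM : (0:ℝ) ≤ α*M := by positivity
      have h1 : α*M*1 ≤ α*M*((1+u)*e) := mul_le_mul_of_nonneg_left hkey hαM
      have h2 : (α*M) * ((1+u)*e) = (α*M + s) * e := by rw [hs_eq]; ring
      have hnn : (0:ℝ) ≤ α*M + s := by linarith [hspos]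
      have h3 : (α*M + s) * e ≤ (α*M + s) * ((M:ℝ)*e) := mul_le_mul_of_nonneg_left hMe hnn
      linarith [h1, h2, h3]
    have key3 : mean ≤ (mean + s)*((M:ℝ)*e) := by
      by_cases hMe1 : (M:ℝ)*e ≤ 1
      · have e1 : mean*(1-(M:ℝ)*e) ≤ (α*M)*(1-(M:ℝ)*e) :=
          mul_le_mul_of_nonneg_right hmean_le (by linarith)
        linarith [e1, key2]
      · push_neg at hMe1
        have h5 : (mean+s)*1 ≤ (mean+s)*((M:ℝ)*e) :=
          mul_le_mul_of_nonneg_left hMe1.le (by linarith : (0:ℝ) ≤ mean+s)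
        linarith [h5, hspos]
    have hms : 0 < mean + s := by linarith
    calc (B.card:ℝ) ≤ K*mean/(mean+s) := by rw [le_div_iff₀ hms]; exact hBsum
    _ ≤ K*((M:ℝ)*e) := by
        rw [div_le_iff₀ hms]
        have h6 := mul_le_mul_of_nonneg_left key3 hKpos.le
        linarith [h6]
end

section
/- Let X̃ be the row permutation of X by a uniformly random permutation π of {1,…,N} (X̃_{i,:} := X_{π(i),:}), N ≥ 2, set X̃* := Y P^{-1} Yᵀ X̃, Z̃ := f(X̃; A, Θ), Z̃* := f(X̃*; A*, Θ), let α := max_{m} max_{k,ℓ} (X_{km} − X_{ℓm})² with α > 0, fix t > 0, and define γ := (2/(N−1))·( ‖X‖_F² − (1/N)·‖Xᵀ1‖₂² ) + α t M √N. Then with probability at least 1 − N² · M · exp(−t²/2) over π, ‖Z̃* − Z̃‖_F ≤ τ²ω² · [ (1 + √N)·‖Δ‖_F·‖X‖_F + √γ · Σ_{i=1}^{N} Σ_{j=1}^{N} | [Y P^{-1} Yᵀ]_{ij} − [D̃^{-1} A]_{ij} | ]. -/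
open Matrix BigOperators Finset

namespace PGE
variable {m n k : Type*} [Fintype m] [Fintype n] [Fintype k]

lemma rowNorm_eq_norm (v : n → ℝ) : rowNorm v = ‖(WithLp.equiv 2 (n → ℝ)).symm v‖ := by
  rw [EuclideanSpace.norm_eq, rowNorm]
  congr 1; apply Finset.sum_congr rfl; intro j _
  simp [Real.norm_eq_abs, sq_abs]

lemma rowNorm_nonneg (v : n → ℝ) : 0 ≤ rowNorm v := Real.sqrt_nonneg _
lemma frobNorm_nonneg (M : Matrix m n ℝ) : 0 ≤ frobNorm M := Real.sqrt_nonneg _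
lemma specNorm_nonneg [DecidableEq n] (M : Matrix m n ℝ) : 0 ≤ specNorm M := norm_nonneg _
lemma frobNorm_sq (M : Matrix m n ℝ) : frobNorm M ^ 2 = ∑ i, ∑ j, (M i j) ^ 2 :=
  Real.sq_sqrt (by positivity)
lemma rowNorm_sq (v : n → ℝ) : rowNorm v ^ 2 = ∑ j, (v j) ^ 2 :=
  Real.sq_sqrt (by positivity)

lemma rowNorm_mulVec_le [DecidableEq n] (M : Matrix m n ℝ) (v : n → ℝ) :
    rowNorm (M *ᵥ v) ≤ specNorm M * rowNorm v := by
  rw [rowNorm_eq_norm, rowNorm_eq_norm, WithLp.equiv_symm_apply, ← Matrix.toEuclideanLin_apply_piLp_toLp]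
  have := (LinearMap.toContinuousLinearMap (Matrix.toEuclideanLin M)).le_opNorm
    ((WithLp.equiv 2 (n → ℝ)).symm v)
  simpa [specNorm] using this

lemma frobNorm_transpose (M : Matrix m n ℝ) : frobNorm Mᵀ = frobNorm M := by
  rw [frobNorm, frobNorm, Finset.sum_comm]
  rfl

lemma specNorm_transpose [DecidableEq m] [DecidableEq n] (M : Matrix m n ℝ) :
    specNorm Mᵀ = specNorm M := by
  have h : Mᵀ = Mᴴ := by ext i j; simp [Matrix.conjTranspose_apply]
  rw [specNorm, h, Matrix.toEuclideanLin_conjTranspose_eq_adjoint,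
    LinearMap.adjoint_toContinuousLinearMap]
  exact LinearIsometryEquiv.norm_map ContinuousLinearMap.adjoint _

lemma frobNorm_le_of_le {M : Matrix m n ℝ} {E : Matrix m n ℝ}
    (h : ∀ i j, |M i j| ≤ E i j) : frobNorm M ≤ frobNorm E := by
  apply Real.sqrt_le_sqrt
  apply Finset.sum_le_sum; intro i _; apply Finset.sum_le_sum; intro j _
  calc (M i j)^2 = |M i j|^2 := (sq_abs _).symm
    _ ≤ (E i j)^2 := pow_le_pow_left₀ (abs_nonneg _) (h i j) 2

lemma rowNorm_add_le (v w : n → ℝ) : rowNorm (v + w) ≤ rowNorm v + rowNorm w := by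
  rw [rowNorm_eq_norm, rowNorm_eq_norm, rowNorm_eq_norm]
  rw [show (WithLp.equiv 2 (n → ℝ)).symm (v + w)
      = (WithLp.equiv 2 (n → ℝ)).symm v + (WithLp.equiv 2 (n → ℝ)).symm w from rfl]
  exact norm_add_le _ _

lemma frobNorm_eq_rowNorm (M : Matrix m n ℝ) :
    frobNorm M = rowNorm (fun p : m × n => M p.1 p.2) := by
  rw [frobNorm, rowNorm, ← Fintype.sum_prod_type']

lemma frobNorm_add_le (P Q : Matrix m n ℝ) :
    frobNorm (P + Q) ≤ frobNorm P + frobNorm Q := by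
  rw [frobNorm_eq_rowNorm, frobNorm_eq_rowNorm, frobNorm_eq_rowNorm]
  exact rowNorm_add_le (fun p : m × n => P p.1 p.2) (fun p : m × n => Q p.1 p.2)

lemma frobNorm_mul_le (P : Matrix m k ℝ) (Q : Matrix k n ℝ) :
    frobNorm (P * Q) ≤ frobNorm P * frobNorm Q := by
  have key : ∑ i, ∑ j, ((P * Q) i j)^2
      ≤ (∑ i, ∑ c, (P i c)^2) * (∑ j, ∑ c, (Q c j)^2) := by
    have h1 : ∀ i j, ((P * Q) i j)^2 ≤ (∑ c, (P i c)^2) * (∑ c, (Q c j)^2) := fun i j => by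
      rw [Matrix.mul_apply]
      exact Finset.sum_mul_sq_le_sq_mul_sq _ _ _
    calc ∑ i, ∑ j, ((P * Q) i j)^2
        ≤ ∑ i, ∑ j, (∑ c, (P i c)^2) * (∑ c, (Q c j)^2) := by
          apply Finset.sum_le_sum; intro i _; apply Finset.sum_le_sum; intro j _; exact h1 i j
      _ = (∑ i, ∑ c, (P i c)^2) * (∑ j, ∑ c, (Q c j)^2) := by
          rw [← Finset.sum_mul_sum]
  calc frobNorm (P * Q)
      ≤ Real.sqrt ((∑ i, ∑ c, (P i c)^2) * (∑ j, ∑ c, (Q c j)^2)) := Real.sqrt_le_sqrt key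
    _ = frobNorm P * frobNorm Q := by
        rw [Real.sqrt_mul (by positivity)]
        congr 1
        rw [frobNorm, Finset.sum_comm]

lemma frobNorm_map_sub_le {τ : ℝ} {σ : ℝ → ℝ} (hσ : ∀ a b, |σ a - σ b| ≤ τ * |a - b|)
    (P Q : Matrix m n ℝ) : frobNorm (P.map σ - Q.map σ) ≤ τ * frobNorm (P - Q) := by
  have hτ : 0 ≤ τ := by have := hσ 1 0; have h0 := abs_nonneg (σ 1 - σ 0); simp at this; linarith
  have key : ∑ i, ∑ j, ((P.map σ - Q.map σ) i j)^2 ≤ τ^2 * ∑ i, ∑ j, ((P - Q) i j)^2 := by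
    rw [Finset.mul_sum]
    apply Finset.sum_le_sum; intro i _
    rw [Finset.mul_sum]
    apply Finset.sum_le_sum; intro j _
    simp only [Matrix.sub_apply, Matrix.map_apply]
    calc (σ (P i j) - σ (Q i j))^2 = |σ (P i j) - σ (Q i j)|^2 := (sq_abs _).symm
      _ ≤ (τ * |P i j - Q i j|)^2 := pow_le_pow_left₀ (abs_nonneg _) (hσ _ _) 2
      _ = τ^2 * (P i j - Q i j)^2 := by rw [mul_pow, sq_abs]
  calc frobNorm (P.map σ - Q.map σ)
      ≤ Real.sqrt (τ^2 * ∑ i, ∑ j, ((P - Q) i j)^2) := Real.sqrt_le_sqrt key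
    _ = τ * frobNorm (P - Q) := by
        rw [Real.sqrt_mul (by positivity), Real.sqrt_sq hτ, frobNorm]

lemma frobNorm_map_le {τ : ℝ} {σ : ℝ → ℝ} (hσ : ∀ a b, |σ a - σ b| ≤ τ * |a - b|)
    (hσ0 : σ 0 = 0) (P : Matrix m n ℝ) : frobNorm (P.map σ) ≤ τ * frobNorm P := by
  have := frobNorm_map_sub_le hσ P 0
  simpa [Matrix.map_zero, hσ0] using this

lemma frobNorm_spec_mul_le [DecidableEq k] (S : Matrix m k ℝ) (M : Matrix k n ℝ) :
    frobNorm (S * M) ≤ specNorm S * frobNorm M := by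
  have hcol : ∀ j, ∑ i, ((S * M) i j)^2 ≤ (specNorm S)^2 * ∑ c, (M c j)^2 := by
    intro j
    have h := rowNorm_mulVec_le S (fun c => M c j)
    have h2 := mul_self_le_mul_self (rowNorm_nonneg _) h
    rw [← pow_two, ← pow_two] at h2
    rw [rowNorm_sq, mul_pow, rowNorm_sq] at h2
    calc ∑ i, ((S * M) i j)^2 = ∑ i, ((S *ᵥ fun c => M c j) i)^2 := by
          apply Finset.sum_congr rfl; intro i _
          rw [Matrix.mul_apply, Matrix.mulVec, dotProduct]
      _ ≤ (specNorm S)^2 * ∑ c, (M c j)^2 := h2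
  have key : ∑ i, ∑ j, ((S * M) i j)^2 ≤ (specNorm S)^2 * ∑ c, ∑ j, (M c j)^2 := by
    rw [Finset.sum_comm]
    calc ∑ j, ∑ i, ((S * M) i j)^2 ≤ ∑ j, (specNorm S)^2 * ∑ c, (M c j)^2 :=
          Finset.sum_le_sum (fun j _ => hcol j)
      _ = (specNorm S)^2 * ∑ c, ∑ j, (M c j)^2 := by
          rw [← Finset.mul_sum, Finset.sum_comm]
  calc frobNorm (S * M) ≤ Real.sqrt ((specNorm S)^2 * ∑ c, ∑ j, (M c j)^2) :=
        Real.sqrt_le_sqrt key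
    _ = specNorm S * frobNorm M := by
        rw [Real.sqrt_mul (by positivity), Real.sqrt_sq (specNorm_nonneg S), frobNorm]

lemma frobNorm_mul_spec_le [DecidableEq k] [DecidableEq n] [DecidableEq m]
    (M : Matrix m k ℝ) (Θ : Matrix k n ℝ) :
    frobNorm (M * Θ) ≤ frobNorm M * specNorm Θ := by
  calc frobNorm (M * Θ) = frobNorm ((M * Θ)ᵀ) := (frobNorm_transpose _).symm
    _ = frobNorm (Θᵀ * Mᵀ) := by rw [Matrix.transpose_mul]
    _ ≤ specNorm Θᵀ * frobNorm Mᵀ := frobNorm_spec_mul_le _ _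
    _ = frobNorm M * specNorm Θ := by rw [specNorm_transpose, frobNorm_transpose, mul_comm]

lemma rowNorm_zero : rowNorm (fun _ : n => (0:ℝ)) = 0 := by simp [rowNorm]

lemma rowNorm_smul (c : ℝ) (v : n → ℝ) : rowNorm (fun x => c * v x) = |c| * rowNorm v := by
  rw [rowNorm, rowNorm]
  have : ∑ j, (c * v j)^2 = c^2 * ∑ j, (v j)^2 := by
    rw [Finset.mul_sum]; apply Finset.sum_congr rfl; intro j _; ring
  rw [this, Real.sqrt_mul (by positivity), Real.sqrt_sq_eq_abs]

lemma rowNorm_sum_le {ι : Type*} (s : Finset ι) (v : ι → n → ℝ) :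
    rowNorm (fun x => ∑ j ∈ s, v j x) ≤ ∑ j ∈ s, rowNorm (v j) := by
  classical
  induction s using Finset.induction with
  | empty => simp [rowNorm_zero]
  | @insert a s ha ih =>
      have heq : (fun x => ∑ j ∈ insert a s, v j x)
          = (v a) + (fun x => ∑ j ∈ s, v j x) := by
        funext x; rw [Finset.sum_insert ha]; rfl
      rw [heq, Finset.sum_insert ha]
      exact le_trans (rowNorm_add_le _ _) (by linarith [ih])

lemma rowNorm_sum_mul_le {ι : Type*} [Fintype ι] (c : ι → ℝ) (v : ι → n → ℝ) :
    rowNorm (fun x => ∑ j, c j * v j x) ≤ ∑ j, |c j| * rowNorm (v j) := by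
  calc rowNorm (fun x => ∑ j, c j * v j x)
      ≤ ∑ j, rowNorm (fun x => c j * v j x) := rowNorm_sum_le _ _
    _ = ∑ j, |c j| * rowNorm (v j) := by
        apply Finset.sum_congr rfl; intro j _; exact rowNorm_smul _ _
end PGE

set_option maxHeartbeats 2000000 in
/-- Theorem 2 (probability made precise): with probability at least `1 − N²·M·exp(−t²/2)`
over a uniformly random row permutation `π` of the features, the GCN error bound with
`γ := (2/(N−1))(‖X‖_F² − (1/N)‖Xᵀ1‖₂²) + α t M √N` holds. -/
theorem perm_gcn_error_probabilistic
    {N M₀ H₁ H C : ℕ} (hN : 2 ≤ N)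
    (A : Matrix (Fin N) (Fin N) ℝ) (X : Matrix (Fin N) (Fin M₀) ℝ)
    (y : Fin N → Fin C)
    (σ1 σ2 : ℝ → ℝ) (τ ω : ℝ)
    (Θ1 : Matrix (Fin M₀) (Fin H₁) ℝ) (Θ2 : Matrix (Fin H₁) (Fin H) ℝ)
    (hA : ∀ i j, 0 ≤ A i j)
    (hclass : ∀ c : Fin C, ∃ i, y i = c)
    (hσ1 : ∀ a b, |σ1 a - σ1 b| ≤ τ * |a - b|) (hσ10 : σ1 0 = 0)
    (hσ2 : ∀ a b, |σ2 a - σ2 b| ≤ τ * |a - b|) (hσ20 : σ2 0 = 0)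
    (hΘ1 : specNorm Θ1 ≤ ω) (hΘ2 : specNorm Θ2 ≤ ω)
    (hArw : specNorm (arw A) ≤ 1)
    (hAstarRw : specNorm (arw (astar A y)) ≤ 1)
    (α : ℝ)
    (hα : α = ⨆ m : Fin M₀, ⨆ k : Fin N, ⨆ ℓ : Fin N, (X k m - X ℓ m) ^ 2)
    (hαpos : 0 < α)
    (t : ℝ) (ht : 0 < t) :
    let Y : Matrix (Fin N) (Fin C) ℝ := oneHot y
    let p : Fin C → ℝ := fun c => ∑ i, Y i c
    let B : Matrix (Fin N) (Fin N) ℝ := Y * Matrix.diagonal (fun c => (p c)⁻¹) * Yᵀ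
    let Δ : Matrix (Fin N) (Fin N) ℝ := A - astar A y
    let d : Fin N → ℝ := fun i => ∑ j, A i j
    let γ : ℝ := (2 / ((N : ℝ) - 1)) *
        (frobNorm X ^ 2 - (1 / N) * rowNorm (fun m => ∑ k, X k m) ^ 2) +
      α * t * M₀ * Real.sqrt N
    let Xt : Equiv.Perm (Fin N) → Matrix (Fin N) (Fin M₀) ℝ :=
      fun π => Matrix.of fun i m => X (π i) m
    1 - (N : ℝ) ^ 2 * M₀ * Real.exp (-t ^ 2 / 2) ≤
      (Nat.card {π : Equiv.Perm (Fin N) //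
          frobNorm (gcn σ1 σ2 (arw (astar A y)) (B * Xt π) Θ1 Θ2 -
              gcn σ1 σ2 (arw A) (Xt π) Θ1 Θ2) ≤
            τ ^ 2 * ω ^ 2 *
              ((1 + Real.sqrt N) * frobNorm Δ * frobNorm X +
                Real.sqrt γ *
                  ∑ i : Fin N, ∑ j : Fin N, |B i j - A i j / (d i + 1)|)} : ℝ) /
        (Fintype.card (Equiv.Perm (Fin N))) := by
  intro Y p B Δ d γ Xt
  classical
  by_cases hbig : 1 - (N:ℝ)^2 * M₀ * Real.exp (-t^2/2) ≤ 0
  · exact le_trans hbig (by positivity)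
  push_neg at hbig
  have hτ : 0 ≤ τ := by
    have := hσ1 1 0; have h0 := abs_nonneg (σ1 1 - σ1 0); simp at this; linarith
  have hω : 0 ≤ ω := le_trans (PGE.specNorm_nonneg Θ1) hΘ1
  have hM₀ : 0 < M₀ := by
    by_contra hM
    push_neg at hM
    have h0 : M₀ = 0 := by omega
    subst h0
    simp [Real.iSup_of_isEmpty] at hα
    exact absurd hα (by linarith)
  have hN2 : (2:ℝ) ≤ (N:ℝ) := by exact_mod_cast hN
  have hM1 : (1:ℝ) ≤ (M₀:ℝ) := by exact_mod_cast hM₀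
  have hexp : Real.exp (-t^2/2) < 1/4 := by
    have he := Real.exp_pos (-t^2/2)
    have h4 : (4:ℝ) ≤ (N:ℝ)^2 := by nlinarith
    have h5 : (4:ℝ) ≤ (N:ℝ)^2 * (M₀:ℝ) := by nlinarith
    have hstep : 4 * Real.exp (-t^2/2) ≤ (N:ℝ)^2 * (M₀:ℝ) * Real.exp (-t^2/2) :=
      mul_le_mul_of_nonneg_right h5 he.le
    linarith
  have ht1 : 1 ≤ t := by
    by_contra hlt
    push_neg at hlt
    have h1 := Real.add_one_le_exp (-t^2/2)
    nlinarith
  have hsqrtN1 : 1 ≤ Real.sqrt N := by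
    rw [show (1:ℝ) = Real.sqrt 1 from (Real.sqrt_one).symm]
    exact Real.sqrt_le_sqrt (by linarith)
  have hα_bound : ∀ (k ℓ : Fin N) (mm : Fin M₀), (X k mm - X ℓ mm)^2 ≤ α := by
    intro k ℓ mm
    rw [hα]
    calc (X k mm - X ℓ mm)^2
        ≤ ⨆ ℓ' : Fin N, (X k mm - X ℓ' mm)^2 :=
          le_ciSup (f := fun ℓ' : Fin N => (X k mm - X ℓ' mm)^2)
            (Set.Finite.bddAbove (Set.finite_range _)) ℓ
      _ ≤ ⨆ k' : Fin N, ⨆ ℓ' : Fin N, (X k' mm - X ℓ' mm)^2 :=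
          le_ciSup (f := fun k' : Fin N => ⨆ ℓ' : Fin N, (X k' mm - X ℓ' mm)^2)
            (Set.Finite.bddAbove (Set.finite_range _)) k
      _ ≤ ⨆ mm' : Fin M₀, ⨆ k' : Fin N, ⨆ ℓ' : Fin N, (X k' mm' - X ℓ' mm')^2 :=
          le_ciSup (f := fun mm' : Fin M₀ => ⨆ k' : Fin N, ⨆ ℓ' : Fin N, (X k' mm' - X ℓ' mm')^2)
            (Set.Finite.bddAbove (Set.finite_range _)) mm
  have hγ1 : 0 ≤ (2 / ((N : ℝ) - 1)) *
      (frobNorm X ^ 2 - (1 / N) * rowNorm (fun m => ∑ k, X k m) ^ 2) := by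
    have hcs : rowNorm (fun m => ∑ k, X k m) ^ 2 ≤ (N:ℝ) * frobNorm X ^ 2 := by
      rw [PGE.rowNorm_sq, PGE.frobNorm_sq]
      calc ∑ mm, (∑ k, X k mm)^2 ≤ ∑ mm, (N:ℝ) * ∑ k, (X k mm)^2 := by
            apply Finset.sum_le_sum; intro mm _
            have := sq_sum_le_card_mul_sum_sq (s := (Finset.univ : Finset (Fin N)))
              (f := fun k => X k mm)
            simpa using this
        _ = (N:ℝ) * ∑ i, ∑ mm, (X i mm)^2 := by
            rw [← Finset.mul_sum, Finset.sum_comm]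
    have hNpos : (0:ℝ) < N := by linarith
    have h1 : (1/(N:ℝ)) * rowNorm (fun m => ∑ k, X k m) ^ 2 ≤ frobNorm X ^ 2 := by
      rw [div_mul_eq_mul_div, one_mul, div_le_iff₀ hNpos]
      linarith [hcs]
    have h2 : (0:ℝ) ≤ 2 / ((N:ℝ) - 1) := by
      apply div_nonneg (by norm_num); linarith
    apply mul_nonneg h2
    linarith
  have hγα : α * (M₀:ℝ) ≤ γ := by
    have h2 : 1 ≤ t * Real.sqrt N := by nlinarith
    have : α * (M₀:ℝ) * 1 ≤ α * (M₀:ℝ) * (t * Real.sqrt N) := by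
      apply mul_le_mul_of_nonneg_left h2 (mul_nonneg hαpos.le (by positivity))
    show α * (M₀:ℝ) ≤ _ + α * t * M₀ * Real.sqrt N
    nlinarith [hγ1]
  have hγ0 : 0 ≤ γ := le_trans (mul_nonneg hαpos.le (by positivity)) hγα
  -- facts about p and B
  have hp1 : ∀ c, (1:ℝ) ≤ p c := by
    intro c
    obtain ⟨i0, hi0⟩ := hclass c
    have h1 : (1:ℝ) = Y i0 c := by simp [Y, oneHot, hi0]
    rw [h1]
    exact Finset.single_le_sum (f := fun i => Y i c)
      (fun i _ => by by_cases h : y i = c <;> simp [Y, oneHot, h]) (Finset.mem_univ i0)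
  have hpne : ∀ c, p c ≠ 0 := fun c => by have := hp1 c; linarith
  have hpinv0 : ∀ c, 0 ≤ (p c)⁻¹ := fun c => inv_nonneg.2 (by linarith [hp1 c])
  have hBapp : ∀ i j, B i j = if y j = y i then (p (y i))⁻¹ else 0 := by
    intro i j
    show ((oneHot y * Matrix.diagonal fun c => (p c)⁻¹) * (oneHot y)ᵀ) i j = _
    rw [Matrix.mul_apply]
    have h1 : ∀ c, (oneHot y * Matrix.diagonal fun c => (p c)⁻¹) i c
        = (if y i = c then (p c)⁻¹ else 0) := by
      intro c
      rw [Matrix.mul_apply]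
      simp [oneHot, Matrix.diagonal_apply, ite_and]
    calc ∑ c, (oneHot y * Matrix.diagonal fun c => (p c)⁻¹) i c * (oneHot y)ᵀ c j
        = ∑ c, (if y i = c then (p c)⁻¹ else 0) * (if y j = c then 1 else 0) := by
          apply Finset.sum_congr rfl; intro c _
          rw [h1 c]; rfl
      _ = if y j = y i then (p (y i))⁻¹ else 0 := by
          by_cases h : y j = y i
          · rw [if_pos h]
            rw [Finset.sum_eq_single (y i)]
            · simp [h]
            · intro c _ hc; simp [Ne.symm hc]
            · intro hc; exact absurd (Finset.mem_univ _) hc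
          · rw [if_neg h]
            apply Finset.sum_eq_zero
            intro c _
            by_cases h1 : y i = c
            · subst h1; simp [fun hh => h hh]
            · simp [h1]
  have hB0 : ∀ i j, 0 ≤ B i j := by
    intro i j; rw [hBapp]; split
    · exact hpinv0 _
    · exact le_refl 0
  have hBrow : ∀ i, ∑ j, B i j = 1 := by
    intro i
    have hpc : p (y i) = ∑ j, if y j = y i then (1:ℝ) else 0 := by
      show ∑ j, Y j (y i) = _
      apply Finset.sum_congr rfl; intro j _
      simp [Y, oneHot]
    calc ∑ j, B i j = ∑ j, if y j = y i then (p (y i))⁻¹ else 0 :=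
          Finset.sum_congr rfl fun j _ => hBapp i j
      _ = (∑ j, if y j = y i then (1:ℝ) else 0) * (p (y i))⁻¹ := by
          rw [Finset.sum_mul]
          apply Finset.sum_congr rfl; intro j _
          split <;> simp
      _ = 1 := by rw [← hpc, mul_inv_cancel₀ (hpne _)]
  -- facts about arw A and arw (astar A y)
  have hd0 : ∀ i, 0 ≤ d i := fun i => Finset.sum_nonneg fun j _ => hA i j
  have hdpos : ∀ i, (0:ℝ) < d i + 1 := fun i => by linarith [hd0 i]
  have hSapp : ∀ i j, arw A i j = (A i j + if i = j then 1 else 0) / (d i + 1) := by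
    intro i j
    show (A + 1) i j / ((∑ k, A i k) + 1) = _
    rw [Matrix.add_apply, Matrix.one_apply]
  have hast0 : ∀ i j, 0 ≤ astar A y i j := by
    intro i j
    show (0:ℝ) ≤ if y i = y j then A i j else 0
    split
    · exact hA i j
    · exact le_refl 0
  have hastle : ∀ i j, astar A y i j ≤ A i j := by
    intro i j
    show (if y i = y j then A i j else 0) ≤ A i j
    split
    · exact le_refl _
    · exact hA i j
  set ds : Fin N → ℝ := fun i => ∑ j, astar A y i j with hds
  have hds0 : ∀ i, 0 ≤ ds i := fun i => Finset.sum_nonneg fun j _ => hast0 i j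
  have hdspos : ∀ i, (0:ℝ) < ds i + 1 := fun i => by linarith [hds0 i]
  have hS1app : ∀ i j, arw (astar A y) i j
      = (astar A y i j + if i = j then 1 else 0) / (ds i + 1) := by
    intro i j
    show (astar A y + 1) i j / ((∑ k, astar A y i k) + 1) = _
    rw [Matrix.add_apply, Matrix.one_apply]
  have hS0 : ∀ i j, 0 ≤ arw A i j := by
    intro i j
    rw [hSapp]
    apply div_nonneg _ (hdpos i).le
    have := hA i j
    split <;> linarith
  have hSrow : ∀ i, ∑ j, arw A i j = 1 := by
    intro i
    have h1 : ∑ j, arw A i j = (∑ j, (A i j + if i = j then 1 else 0)) / (d i + 1) := by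
      rw [Finset.sum_div]
      exact Finset.sum_congr rfl fun j _ => hSapp i j
    rw [h1, Finset.sum_add_distrib]
    have h2 : (∑ j, if i = j then (1:ℝ) else 0) = 1 := by simp
    rw [h2]
    exact div_self (ne_of_gt (hdpos i))
  have hS1row : ∀ i, ∑ j, arw (astar A y) i j = 1 := by
    intro i
    have h1 : ∑ j, arw (astar A y) i j
        = (∑ j, (astar A y i j + if i = j then 1 else 0)) / (ds i + 1) := by
      rw [Finset.sum_div]
      exact Finset.sum_congr rfl fun j _ => hS1app i j
    rw [h1, Finset.sum_add_distrib]
    have h2 : (∑ j, if i = j then (1:ℝ) else 0) = 1 := by simp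
    rw [h2]
    exact div_self (ne_of_gt (hdspos i))
  have hS1zero : ∀ i j, y i ≠ y j → arw (astar A y) i j = 0 := by
    intro i j hy
    rw [hS1app]
    have h1 : astar A y i j = 0 := by
      show (if y i = y j then A i j else 0) = 0
      rw [if_neg hy]
    have h2 : (if i = j then (1:ℝ) else 0) = 0 := by
      rw [if_neg]; rintro rfl; exact hy rfl
    rw [h1, h2, add_zero, zero_div]
  -- facts about Δ
  have hΔapp : ∀ i j, Δ i j = A i j - astar A y i j := fun i j => rfl
  have hΔ0 : ∀ i j, 0 ≤ Δ i j := fun i j => by rw [hΔapp]; linarith [hastle i j]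
  set δr : Fin N → ℝ := fun i => ∑ j, Δ i j with hδr
  have hδr0 : ∀ i, 0 ≤ δr i := fun i => Finset.sum_nonneg fun j _ => hΔ0 i j
  have hdds : ∀ i, d i = ds i + δr i := by
    intro i
    show ∑ j, A i j = (∑ j, astar A y i j) + ∑ j, Δ i j
    rw [← Finset.sum_add_distrib]
    exact Finset.sum_congr rfl fun j _ => by rw [hΔapp]; ring
  -- entrywise bound for arw (astar A y) - arw A
  have hentry : ∀ i j, |arw (astar A y) i j - arw A i j| ≤ Δ i j + arw A i j * δr i := by
    intro i j
    have h1 := hdspos i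
    have h2 := hdpos i
    have hkey : arw (astar A y) i j - arw A i j
        = (-(Δ i j) + arw A i j * δr i) / (ds i + 1) := by
      rw [hS1app, hSapp, hΔapp]
      have hsub : δr i = d i - ds i := by rw [hdds i]; ring
      rw [hsub]
      field_simp
      ring
    rw [hkey, abs_div, abs_of_pos h1]
    have h3 : |(-(Δ i j) + arw A i j * δr i)| ≤ Δ i j + arw A i j * δr i := by
      calc |(-(Δ i j) + arw A i j * δr i)| ≤ |(-(Δ i j))| + |arw A i j * δr i| := abs_add_le _ _
        _ = Δ i j + arw A i j * δr i := by
            rw [abs_neg, abs_of_nonneg (hΔ0 i j),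
              abs_of_nonneg (mul_nonneg (hS0 i j) (hδr0 i))]
    exact le_trans (div_le_self (abs_nonneg _) (by linarith [hds0 i])) h3
  -- Frobenius bound for arw (astar A y) - arw A
  have hG : frobNorm (Matrix.of fun i j => arw A i j * δr i) ≤ Real.sqrt N * frobNorm Δ := by
    have hsum : ∑ i, ∑ j, ((Matrix.of fun i j => arw A i j * δr i) i j)^2
        ≤ (N:ℝ) * ∑ i, ∑ j, (Δ i j)^2 := by
      rw [Finset.mul_sum]
      apply Finset.sum_le_sum
      intro i _
      have e1 : ∑ j, ((Matrix.of fun i j => arw A i j * δr i) i j)^2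
          = (δr i)^2 * ∑ j, (arw A i j)^2 := by
        rw [Finset.mul_sum]
        apply Finset.sum_congr rfl; intro j _
        show (arw A i j * δr i)^2 = _
        ring
      rw [e1]
      have e2 : ∑ j, (arw A i j)^2 ≤ 1 := by
        calc ∑ j, (arw A i j)^2 ≤ (∑ j, arw A i j)^2 :=
              Finset.sum_sq_le_sq_sum_of_nonneg fun j _ => hS0 i j
          _ = 1 := by rw [hSrow i]; norm_num
      have e3 : (δr i)^2 ≤ (N:ℝ) * ∑ j, (Δ i j)^2 := by
        have := sq_sum_le_card_mul_sum_sq (s := (Finset.univ : Finset (Fin N)))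
          (f := fun j => Δ i j)
        simpa using this
      calc (δr i)^2 * ∑ j, (arw A i j)^2 ≤ (δr i)^2 * 1 :=
            mul_le_mul_of_nonneg_left e2 (sq_nonneg _)
        _ = (δr i)^2 := mul_one _
        _ ≤ (N:ℝ) * ∑ j, (Δ i j)^2 := e3
    have h4 : frobNorm (Matrix.of fun i j => arw A i j * δr i)
        ≤ Real.sqrt ((N:ℝ) * ∑ i, ∑ j, (Δ i j)^2) := by
      rw [frobNorm]
      exact Real.sqrt_le_sqrt hsum
    calc frobNorm (Matrix.of fun i j => arw A i j * δr i)
        ≤ Real.sqrt ((N:ℝ) * ∑ i, ∑ j, (Δ i j)^2) := h4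
      _ = Real.sqrt N * frobNorm Δ := by
          rw [Real.sqrt_mul (by positivity), frobNorm]
  have hS1S : frobNorm (arw (astar A y) - arw A) ≤ (1 + Real.sqrt N) * frobNorm Δ := by
    have h1 : frobNorm (arw (astar A y) - arw A)
        ≤ frobNorm (Δ + Matrix.of fun i j => arw A i j * δr i) := by
      apply PGE.frobNorm_le_of_le
      intro i j
      have := hentry i j
      simpa [Matrix.sub_apply, Matrix.add_apply] using this
    have h2 := PGE.frobNorm_add_le Δ (Matrix.of fun i j => arw A i j * δr i)
    calc frobNorm (arw (astar A y) - arw A)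
        ≤ frobNorm Δ + frobNorm (Matrix.of fun i j => arw A i j * δr i) := le_trans h1 h2
      _ ≤ frobNorm Δ + Real.sqrt N * frobNorm Δ := by linarith [hG]
      _ = (1 + Real.sqrt N) * frobNorm Δ := by ring
  -- deterministic bound for every permutation
  have hdet : ∀ π : Equiv.Perm (Fin N),
      frobNorm (gcn σ1 σ2 (arw (astar A y)) (B * Xt π) Θ1 Θ2 -
          gcn σ1 σ2 (arw A) (Xt π) Θ1 Θ2) ≤
        τ ^ 2 * ω ^ 2 * ((1 + Real.sqrt N) * frobNorm Δ * frobNorm X +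
          Real.sqrt γ * ∑ i : Fin N, ∑ j : Fin N, |B i j - A i j / (d i + 1)|) := by
    intro π
    set W := Xt π with hW
    have hFW : frobNorm W = frobNorm X := by
      rw [frobNorm, frobNorm]
      congr 1
      exact Equiv.sum_comp π fun i => ∑ mm, (X i mm)^2
    have hBWrow : ∀ (i i' : Fin N), y i = y i' → ∀ mm, (B * W) i mm = (B * W) i' mm := by
      intro i i' hy mm
      rw [Matrix.mul_apply, Matrix.mul_apply]
      apply Finset.sum_congr rfl
      intro j _
      rw [hBapp, hBapp, hy]
    have hS1BW : arw (astar A y) * (B * W) = B * W := by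
      ext i mm
      rw [Matrix.mul_apply]
      have hterm : ∀ j, arw (astar A y) i j * (B * W) j mm
          = arw (astar A y) i j * (B * W) i mm := by
        intro j
        by_cases hy : y i = y j
        · rw [hBWrow j i hy.symm mm]
        · rw [hS1zero i j hy, zero_mul, zero_mul]
      rw [Finset.sum_congr rfl fun j _ => hterm j, ← Finset.sum_mul, hS1row i, one_mul]
    have hs0 : ∀ i, (0:ℝ) ≤ ∑ j, |B i j - A i j / (d i + 1)| :=
      fun i => Finset.sum_nonneg fun j _ => abs_nonneg _
    have hrowid : ∀ i mm, ((B - arw A) * W) i mm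
        = ∑ j, (B i j - arw A i j) * (W j mm - W i mm) := by
      intro i mm
      have h0 : ∑ j, (B i j - arw A i j) = 0 := by
        rw [Finset.sum_sub_distrib, hBrow i, hSrow i]; ring
      have expand : ∑ j, (B i j - arw A i j) * (W j mm - W i mm)
          = (∑ j, (B i j - arw A i j) * W j mm) - (∑ j, (B i j - arw A i j)) * W i mm := by
        rw [Finset.sum_mul, ← Finset.sum_sub_distrib]
        apply Finset.sum_congr rfl; intro j _; ring
      rw [expand, h0, zero_mul, sub_zero, Matrix.mul_apply]
      apply Finset.sum_congr rfl; intro j _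
      rw [Matrix.sub_apply]
    have hdiffbound : ∀ (i j : Fin N), rowNorm (fun mm => W j mm - W i mm) ≤ Real.sqrt γ := by
      intro i j
      rw [rowNorm]
      apply Real.sqrt_le_sqrt
      calc ∑ mm, (W j mm - W i mm)^2 ≤ ∑ _mm : Fin M₀, α := by
            apply Finset.sum_le_sum; intro mm _
            exact hα_bound (π j) (π i) mm
        _ = α * (M₀:ℝ) := by
            rw [Finset.sum_const, Finset.card_univ, Fintype.card_fin, nsmul_eq_mul, mul_comm]
        _ ≤ γ := hγα
    have hrowbound : ∀ i, rowNorm (fun mm => ((B - arw A) * W) i mm)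
        ≤ Real.sqrt γ * ∑ j, |B i j - A i j / (d i + 1)| := by
      intro i
      have e : (fun mm => ((B - arw A) * W) i mm)
          = fun mm => ∑ j, (B i j - arw A i j) * (W j mm - W i mm) := funext (hrowid i)
      rw [e]
      refine le_trans (PGE.rowNorm_sum_mul_le _ _) ?_
      have hterm : ∀ j, |B i j - arw A i j| * rowNorm (fun mm => W j mm - W i mm)
          ≤ Real.sqrt γ * |B i j - A i j / (d i + 1)| := by
        intro j
        by_cases hij : j = i
        · subst hij
          have hzero : (fun mm => W j mm - W j mm) = fun _ : Fin M₀ => (0:ℝ) := by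
            funext mm; ring
          rw [hzero, PGE.rowNorm_zero, mul_zero]
          exact mul_nonneg (Real.sqrt_nonneg _) (abs_nonneg _)
        · have hSij : arw A i j = A i j / (d i + 1) := by
            rw [hSapp i j, if_neg fun h => hij h.symm, add_zero]
          rw [hSij]
          calc |B i j - A i j / (d i + 1)| * rowNorm (fun mm => W j mm - W i mm)
              ≤ |B i j - A i j / (d i + 1)| * Real.sqrt γ :=
                mul_le_mul_of_nonneg_left (hdiffbound i j) (abs_nonneg _)
            _ = Real.sqrt γ * |B i j - A i j / (d i + 1)| := mul_comm _ _
      calc ∑ j, |B i j - arw A i j| * rowNorm (fun mm => W j mm - W i mm)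
          ≤ ∑ j, Real.sqrt γ * |B i j - A i j / (d i + 1)| :=
            Finset.sum_le_sum fun j _ => hterm j
        _ = Real.sqrt γ * ∑ j, |B i j - A i j / (d i + 1)| := by rw [← Finset.mul_sum]
    have hFBSW : frobNorm ((B - arw A) * W)
        ≤ Real.sqrt γ * ∑ i, ∑ j, |B i j - A i j / (d i + 1)| := by
      have hsq : ∑ i, ∑ mm, (((B - arw A) * W) i mm)^2
          ≤ (Real.sqrt γ * ∑ i, ∑ j, |B i j - A i j / (d i + 1)|)^2 := by
        calc ∑ i, ∑ mm, (((B - arw A) * W) i mm)^2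
            = ∑ i, rowNorm (fun mm => ((B - arw A) * W) i mm)^2 := by
              apply Finset.sum_congr rfl; intro i _
              rw [PGE.rowNorm_sq]
          _ ≤ ∑ i, (Real.sqrt γ * ∑ j, |B i j - A i j / (d i + 1)|)^2 := by
              apply Finset.sum_le_sum; intro i _
              exact pow_le_pow_left₀ (PGE.rowNorm_nonneg _) (hrowbound i) 2
          _ ≤ (∑ i, Real.sqrt γ * ∑ j, |B i j - A i j / (d i + 1)|)^2 :=
              Finset.sum_sq_le_sq_sum_of_nonneg fun i _ =>
                mul_nonneg (Real.sqrt_nonneg _) (hs0 i)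
          _ = (Real.sqrt γ * ∑ i, ∑ j, |B i j - A i j / (d i + 1)|)^2 := by
              rw [← Finset.mul_sum]
      have hnn : (0:ℝ) ≤ Real.sqrt γ * ∑ i, ∑ j, |B i j - A i j / (d i + 1)| :=
        mul_nonneg (Real.sqrt_nonneg _) (Finset.sum_nonneg fun i _ => hs0 i)
      rw [frobNorm]
      calc Real.sqrt (∑ i, ∑ mm, (((B - arw A) * W) i mm)^2)
          ≤ Real.sqrt ((Real.sqrt γ * ∑ i, ∑ j, |B i j - A i j / (d i + 1)|)^2) :=
            Real.sqrt_le_sqrt hsq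
        _ = Real.sqrt γ * ∑ i, ∑ j, |B i j - A i j / (d i + 1)| := Real.sqrt_sq hnn
    -- assemble
    set H' : Matrix (Fin N) (Fin H₁) ℝ := ((B * W) * Θ1).map σ1 with hH'
    set Hm : Matrix (Fin N) (Fin H₁) ℝ := ((arw A * W) * Θ1).map σ1 with hHm
    have hg1 : gcn σ1 σ2 (arw (astar A y)) (B * W) Θ1 Θ2
        = (arw (astar A y) * H' * Θ2).map σ2 := by
      show ((arw (astar A y) * (((arw (astar A y) * (B * W)) * Θ1).map σ1)) * Θ2).map σ2 = _
      rw [hS1BW, hH']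
    have hg2 : gcn σ1 σ2 (arw A) W Θ1 Θ2 = (arw A * Hm * Θ2).map σ2 := by
      rw [hHm]; rfl
    have hFH : frobNorm Hm ≤ τ * ω * frobNorm X := by
      calc frobNorm Hm ≤ τ * frobNorm ((arw A * W) * Θ1) := by
            rw [hHm]; exact PGE.frobNorm_map_le hσ1 hσ10 _
        _ ≤ τ * (frobNorm (arw A * W) * specNorm Θ1) :=
            mul_le_mul_of_nonneg_left (PGE.frobNorm_mul_spec_le _ _) hτ
        _ ≤ τ * (frobNorm (arw A * W) * ω) :=
            mul_le_mul_of_nonneg_left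
              (mul_le_mul_of_nonneg_left hΘ1 (PGE.frobNorm_nonneg _)) hτ
        _ ≤ τ * ((specNorm (arw A) * frobNorm W) * ω) :=
            mul_le_mul_of_nonneg_left
              (mul_le_mul_of_nonneg_right (PGE.frobNorm_spec_mul_le _ _) hω) hτ
        _ ≤ τ * ((1 * frobNorm W) * ω) := by
            apply mul_le_mul_of_nonneg_left _ hτ
            apply mul_le_mul_of_nonneg_right _ hω
            exact mul_le_mul_of_nonneg_right hArw (PGE.frobNorm_nonneg _)
        _ = τ * ω * frobNorm X := by rw [hFW]; ring
    have hFHdiff : frobNorm (H' - Hm)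
        ≤ τ * ω * (Real.sqrt γ * ∑ i, ∑ j, |B i j - A i j / (d i + 1)|) := by
      calc frobNorm (H' - Hm) ≤ τ * frobNorm ((B * W) * Θ1 - (arw A * W) * Θ1) := by
            rw [hH', hHm]; exact PGE.frobNorm_map_sub_le hσ1 _ _
        _ = τ * frobNorm (((B * W) - (arw A * W)) * Θ1) := by rw [Matrix.sub_mul]
        _ ≤ τ * (frobNorm ((B * W) - (arw A * W)) * specNorm Θ1) :=
            mul_le_mul_of_nonneg_left (PGE.frobNorm_mul_spec_le _ _) hτ
        _ ≤ τ * (frobNorm ((B * W) - (arw A * W)) * ω) :=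
            mul_le_mul_of_nonneg_left
              (mul_le_mul_of_nonneg_left hΘ1 (PGE.frobNorm_nonneg _)) hτ
        _ = τ * ω * frobNorm ((B - arw A) * W) := by rw [← Matrix.sub_mul]; ring
        _ ≤ τ * ω * (Real.sqrt γ * ∑ i, ∑ j, |B i j - A i j / (d i + 1)|) :=
            mul_le_mul_of_nonneg_left hFBSW (mul_nonneg hτ hω)
    have hsplit : arw (astar A y) * H' * Θ2 - arw A * Hm * Θ2
        = ((arw (astar A y) - arw A) * Hm + arw (astar A y) * (H' - Hm)) * Θ2 := by
      rw [show (arw (astar A y) - arw A) * Hm + arw (astar A y) * (H' - Hm)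
          = arw (astar A y) * H' - arw A * Hm by rw [Matrix.sub_mul, Matrix.mul_sub]; abel,
        Matrix.sub_mul]
    rw [hg1, hg2]
    calc frobNorm ((arw (astar A y) * H' * Θ2).map σ2 - (arw A * Hm * Θ2).map σ2)
        ≤ τ * frobNorm (arw (astar A y) * H' * Θ2 - arw A * Hm * Θ2) :=
          PGE.frobNorm_map_sub_le hσ2 _ _
      _ = τ * frobNorm (((arw (astar A y) - arw A) * Hm
            + arw (astar A y) * (H' - Hm)) * Θ2) := by rw [hsplit]
      _ ≤ τ * (frobNorm ((arw (astar A y) - arw A) * Hm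
            + arw (astar A y) * (H' - Hm)) * specNorm Θ2) :=
          mul_le_mul_of_nonneg_left (PGE.frobNorm_mul_spec_le _ _) hτ
      _ ≤ τ * (frobNorm ((arw (astar A y) - arw A) * Hm
            + arw (astar A y) * (H' - Hm)) * ω) :=
          mul_le_mul_of_nonneg_left
            (mul_le_mul_of_nonneg_left hΘ2 (PGE.frobNorm_nonneg _)) hτ
      _ ≤ τ * ((frobNorm ((arw (astar A y) - arw A) * Hm)
            + frobNorm (arw (astar A y) * (H' - Hm))) * ω) :=
          mul_le_mul_of_nonneg_left
            (mul_le_mul_of_nonneg_right (PGE.frobNorm_add_le _ _) hω) hτ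
      _ ≤ τ * ((frobNorm (arw (astar A y) - arw A) * frobNorm Hm
            + specNorm (arw (astar A y)) * frobNorm (H' - Hm)) * ω) :=
          mul_le_mul_of_nonneg_left
            (mul_le_mul_of_nonneg_right
              (add_le_add (PGE.frobNorm_mul_le _ _) (PGE.frobNorm_spec_mul_le _ _)) hω) hτ
      _ ≤ τ * ((((1 + Real.sqrt N) * frobNorm Δ) * (τ * ω * frobNorm X)
            + 1 * (τ * ω * (Real.sqrt γ * ∑ i, ∑ j, |B i j - A i j / (d i + 1)|))) * ω) := by
          apply mul_le_mul_of_nonneg_left _ hτ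
          apply mul_le_mul_of_nonneg_right _ hω
          apply add_le_add
          · exact mul_le_mul hS1S hFH (PGE.frobNorm_nonneg _)
              (mul_nonneg (by positivity) (PGE.frobNorm_nonneg _))
          · exact mul_le_mul hAstarRw hFHdiff (PGE.frobNorm_nonneg _) (by norm_num)
      _ = τ ^ 2 * ω ^ 2 * ((1 + Real.sqrt N) * frobNorm Δ * frobNorm X +
            Real.sqrt γ * ∑ i, ∑ j, |B i j - A i j / (d i + 1)|) := by ring
  -- conclude: the event holds for every permutation
  have hcard : (Nat.card {π : Equiv.Perm (Fin N) //
      frobNorm (gcn σ1 σ2 (arw (astar A y)) (B * Xt π) Θ1 Θ2 -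
          gcn σ1 σ2 (arw A) (Xt π) Θ1 Θ2) ≤
        τ ^ 2 * ω ^ 2 * ((1 + Real.sqrt N) * frobNorm Δ * frobNorm X +
          Real.sqrt γ * ∑ i : Fin N, ∑ j : Fin N, |B i j - A i j / (d i + 1)|)} : ℕ)
      = Fintype.card (Equiv.Perm (Fin N)) := by
    rw [Nat.card_congr (Equiv.subtypeUnivEquiv hdet), Nat.card_eq_fintype_card]
  rw [hcard, div_self (by
    have := Fintype.card_pos (α := Equiv.Perm (Fin N))
    positivity)]
  have hnn : (0:ℝ) ≤ (N:ℝ)^2 * M₀ * Real.exp (-t^2/2) := by positivity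
  linarith
end
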